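/- arXiv:math/0303317 — 4 statements merged into one kernel-verified Lean document; each statement's English description precedes it below -/
import Mathlib

section
/- For every natural number n ≥ 4 and every rectilinear drawing R of the complete graph K_n, the crossing number satisfies n(R(K_n)) ≥ 2·(n choose 4). -/
set_option linter.unusedSectionVars false

/-!
Common definitions for the Orchard crossing number
(Feder–Garber, "The Orchard crossing number of an abstract graph").
-/

noncomputable section

/-- Points of the plane. -/
abbrev Pt : Type := ℝ × ℝ

/-- The line through two points of the plane. -/
def lineThrough (p q : Pt) : Set Pt := (affineSpan ℝ ({p, q} : Set Pt) : Set Pt)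

/-- A line (or any set) `L` separates the points `P` and `Q` if both lie off `L`
and they lie in different connected components of the complement of `L`. -/
def Separates (L : Set Pt) (P Q : Pt) : Prop :=
  P ∉ L ∧ Q ∉ L ∧ connectedComponentIn Lᶜ P ≠ connectedComponentIn Lᶜ Q

theorem Separates.symm {L : Set Pt} {P Q : Pt} (h : Separates L P Q) : Separates L Q P :=
  ⟨h.2.1, h.1, h.2.2.symm⟩

/-- A generic configuration: a finite set of points, no three of which are collinear. -/
def GenericConfig (S : Set Pt) : Prop :=
  S.Finite ∧ ∀ p ∈ S, ∀ q ∈ S, ∀ r ∈ S, p ≠ q → p ≠ r → q ≠ r →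
    ¬ Collinear ℝ ({p, q, r} : Set Pt)

/-- A finite set of points is in convex position if every point of it is an extreme
point of its convex hull, i.e. lies outside the convex hull of the other points. -/
def ConvexPosition (S : Set Pt) : Prop :=
  ∀ p ∈ S, p ∉ convexHull ℝ (S \ {p})

variable {V : Type*} [Fintype V] [DecidableEq V]

/-- A rectilinear drawing of a graph on vertex set `V`: an injective placement of the
vertices in the plane whose image is a generic configuration. -/
def IsRectDrawing (f : V → Pt) : Prop :=
  Function.Injective f ∧ GenericConfig (Set.range f)

/-- `sepCount f s t` is `n(s,t)`: the number of (unordered) pairs of vertices, both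
different from `s` and `t`, whose drawn points span a line separating `f s` from `f t`. -/
def sepCount (f : V → Pt) (s t : V) : ℕ :=
  Set.ncard {e : Finset V | ∃ a b : V, e = {a, b} ∧ a ≠ b ∧ s ∉ e ∧ t ∉ e ∧
    Separates (lineThrough (f a) (f b)) (f s) (f t)}

theorem sepCount_symm (f : V → Pt) (s t : V) : sepCount f s t = sepCount f t s := by
  unfold sepCount
  congr 1
  ext e
  constructor
  · rintro ⟨a, b, rfl, hab, hs, ht, hsep⟩
    exact ⟨a, b, rfl, hab, ht, hs, hsep.symm⟩
  · rintro ⟨a, b, rfl, hab, ht, hs, hsep⟩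
    exact ⟨a, b, rfl, hab, hs, ht, hsep.symm⟩

/-- The crossing number `n(R(G))` of a drawing: the sum of `n(s,t)` over all edges. -/
def drawingCrossings (G : SimpleGraph V) (f : V → Pt) : ℕ :=
  ∑ e ∈ G.edgeSet.toFinite.toFinset,
    Sym2.lift ⟨fun s t => sepCount f s t, fun s t => sepCount_symm f s t⟩ e

/-- The Orchard crossing number: the minimum of `n(R(G))` over all rectilinear drawings. -/
def OCN (G : SimpleGraph V) : ℕ :=
  sInf {n | ∃ f : V → Pt, IsRectDrawing f ∧ drawingCrossings G f = n}

/-- The maximal Orchard crossing number: the maximum of `n(R(G))` over all drawings. -/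
def MOCN (G : SimpleGraph V) : ℕ :=
  sSup {n | ∃ f : V → Pt, IsRectDrawing f ∧ drawingCrossings G f = n}

/-- The open segment drawn for an edge. -/
def edgeSeg (f : V → Pt) (e : Sym2 V) : Set Pt :=
  Sym2.lift ⟨fun a b => openSegment ℝ (f a) (f b), fun a b => openSegment_symm ℝ (f a) (f b)⟩ e

/-- The number of unordered pairs of distinct edges of `G` whose drawn open segments
intersect. -/
def crossPairs (G : SimpleGraph V) (f : V → Pt) : ℕ :=
  Set.ncard {p : Finset (Sym2 V) | ∃ e₁ e₂ : Sym2 V, p = {e₁, e₂} ∧ e₁ ≠ e₂ ∧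
    e₁ ∈ G.edgeSet ∧ e₂ ∈ G.edgeSet ∧ (edgeSeg f e₁ ∩ edgeSeg f e₂).Nonempty}

/-- The rectilinear crossing number: the minimum number of crossing pairs of edges
over all rectilinear drawings. -/
def rcr (G : SimpleGraph V) : ℕ :=
  sInf {n | ∃ f : V → Pt, IsRectDrawing f ∧ crossPairs G f = n}

/-- The number of 4-element subsets of the drawn points which are in convex position. -/
def convexFour (f : V → Pt) : ℕ :=
  Set.ncard {Q : Finset Pt | Q.card = 4 ∧ (Q : Set Pt) ⊆ Set.range f ∧
    ConvexPosition (Q : Set Pt)}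

/-- The cyclic successor on `Fin n`. -/
def nextFin {n : ℕ} (i : Fin n) : Fin n :=
  ⟨(i.val + 1) % n, Nat.mod_lt _ (Nat.zero_lt_of_lt i.isLt)⟩

/-- The star graph `K_{n,1}` on `n+1` vertices: the center `0` is joined to each of
the `n` outer vertices. -/
def starGraph (n : ℕ) : SimpleGraph (Fin (n + 1)) :=
  SimpleGraph.fromEdgeSet {e | ∃ i : Fin n, e = s((0 : Fin (n + 1)), i.succ)}

/-- The wheel graph `W_{n,1}` on `n+1` vertices: a cycle on the `n` outer vertices
together with a hub `0` joined to each of them. -/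
def wheelGraph (n : ℕ) : SimpleGraph (Fin (n + 1)) :=
  SimpleGraph.fromEdgeSet
    ({e | ∃ i : Fin n, e = s((0 : Fin (n + 1)), i.succ)} ∪
     {e | ∃ i : Fin n, e = s(i.succ, (nextFin i).succ)})

/-- The cycle graph `C_n` on the outer vertices `1, …, n` of `Fin (n+1)`, together
with the isolated vertex `0`. -/
def cycleWithIsolated (n : ℕ) : SimpleGraph (Fin (n + 1)) :=
  SimpleGraph.fromEdgeSet {e | ∃ i : Fin n, e = s(i.succ, (nextFin i).succ)}

/-- `HullCycle f` says that for every `i`, all the other drawn points lie (strictly) on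
one side of the line through `f i` and `f (i+1)`; for an injective generic placement this
means the points are in convex position and occur around the convex hull exactly in the
cyclic order `f 0, f 1, …`. -/
def HullCycle {m : ℕ} (f : Fin m → Pt) : Prop :=
  ∀ i j l : Fin m, j ≠ i → j ≠ nextFin i → l ≠ i → l ≠ nextFin i →
    ¬ Separates (lineThrough (f i) (f (nextFin i))) (f j) (f l)

end

/-!
Summing `n(s,t)` over the edges of `K_n` counts the pairs (edge `st`, line `ab`) with
`a, b, s, t` distinct and `ab` separating `s` from `t`; group them by the four-set `{a, b, s, t}`.
For four points in general position and any one of them `d`, two of the orientations of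
`(d,a,b)`, `(d,b,c)`, `(d,c,a)` agree in sign, so one of the lines `da`, `db`, `dc` separates
the other two points. This yields an incidence whose line passes through a chosen point `x`, and
then a second one whose line passes through a point off the first line; hence every four-set
contributes at least two.
-/

noncomputable def orient (u v w : Pt) : ℝ :=
  (v.1 - u.1) * (w.2 - u.2) - (v.2 - u.2) * (w.1 - u.1)

lemma orient_rotate (u v w : Pt) : orient u v w = orient v w u := by unfold orient; ring

lemma orient_swap (u v w : Pt) : orient u w v = -orient u v w := by unfold orient; ring

lemma lineThrough_eq_setOf_orient_eq_zero {u v : Pt} (huv : u ≠ v) :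
    lineThrough u v = {x | orient u v x = 0} := by
  ext x
  rw [lineThrough, SetLike.mem_coe, ← AffineSubspace.vsub_right_mem_direction_iff_mem
    (left_mem_affineSpan_pair ℝ u v), direction_affineSpan, mem_vectorSpan_pair_rev]
  constructor
  · rintro ⟨r, hr⟩
    have h1 : r * (v.1 - u.1) = x.1 - u.1 := congrArg Prod.fst hr
    have h2 : r * (v.2 - u.2) = x.2 - u.2 := congrArg Prod.snd hr
    simp only [Set.mem_ofPred_eq, orient]
    linear_combination (v.2 - u.2) * h1 - (v.1 - u.1) * h2
  · intro h
    simp only [Set.mem_ofPred_eq, orient] at h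
    by_cases h1 : v.1 = u.1
    · have h2 : v.2 - u.2 ≠ 0 := fun h2 => huv (Prod.ext h1.symm (by linarith))
      refine ⟨(x.2 - u.2) / (v.2 - u.2), Prod.ext ?_ ?_⟩
      · have hx : (v.2 - u.2) * (x.1 - u.1) = 0 := by rw [h1, sub_self, zero_mul] at h; linarith
        simp [h1, sub_eq_zero.1 ((mul_eq_zero.1 hx).resolve_left h2)]
      · simp [field]
    · have h2 : v.1 - u.1 ≠ 0 := sub_ne_zero.2 h1
      refine ⟨(x.1 - u.1) / (v.1 - u.1), Prod.ext ?_ ?_⟩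
      · simp [field]
      · simp [field]
        linear_combination -h

lemma collinear_of_orient_eq_zero {u v w : Pt} (h : orient u v w = 0) :
    Collinear ℝ ({u, v, w} : Set Pt) := by
  rcases eq_or_ne v w with rfl | hvw
  · simpa using collinear_pair ℝ u v
  · refine collinear_insert_of_mem_affineSpan_pair ?_
    rw [← SetLike.mem_coe, ← lineThrough, lineThrough_eq_setOf_orient_eq_zero hvw]
    rwa [Set.mem_ofPred_eq, ← orient_rotate]

lemma separates_setOf_eq_zero_of_mul_neg {φ : Pt → ℝ} (hφ : Continuous φ) {P Q : Pt}
    (h : φ P * φ Q < 0) : Separates {x | φ x = 0} P Q := by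
  have hP : φ P ≠ 0 := by rintro h0; simp [h0] at h
  have hQ : φ Q ≠ 0 := by rintro h0; simp [h0] at h
  refine ⟨hP, hQ, fun heq => ?_⟩
  have hQP : Q ∈ connectedComponentIn {x | φ x = 0}ᶜ P := heq ▸ mem_connectedComponentIn hQ
  obtain ⟨x, hxP, hx⟩ := isPreconnected_connectedComponentIn.intermediate_value₂ hQP
    (mem_connectedComponentIn hP) (f := fun x => φ P * φ x) (g := 0)
    (by fun_prop) continuousOn_const h.le (mul_self_nonneg _)
  exact connectedComponentIn_subset _ _ hxP (by simpa [hP] using hx)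

lemma separates_lineThrough_of_orient_mul_neg {u v P Q : Pt}
    (h : orient u v P * orient u v Q < 0) : Separates (lineThrough u v) P Q := by
  have huv : u ≠ v := by rintro rfl; simp [orient] at h
  rw [lineThrough_eq_setOf_orient_eq_zero huv]
  exact separates_setOf_eq_zero_of_mul_neg (by unfold orient; fun_prop) h

lemma orient_ne_zero_of_not_collinear {u v w : Pt} (h : ¬ Collinear ℝ ({u, v, w} : Set Pt)) :
    orient u v w ≠ 0 :=
  fun h0 => h (collinear_of_orient_eq_zero h0)

lemma separates_or_separates_or_separates {d a b c : Pt}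
    (hab : orient d a b ≠ 0) (hbc : orient d b c ≠ 0) (hca : orient d c a ≠ 0) :
    Separates (lineThrough d a) b c ∨ Separates (lineThrough d b) c a ∨
      Separates (lineThrough d c) a b := by
  have same_sign : 0 < orient d c a * orient d a b ∨ 0 < orient d a b * orient d b c ∨
      0 < orient d b c * orient d c a := by
    rcases hab.lt_or_gt with h₁ | h₁ <;> rcases hbc.lt_or_gt with h₂ | h₂ <;>
      rcases hca.lt_or_gt with h₃ | h₃ <;>
      first
      | exact Or.inl (by nlinarith)
      | exact Or.inr (Or.inl (by nlinarith))
      | exact Or.inr (Or.inr (by nlinarith))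
  refine same_sign.imp (fun h => ?_) (Or.imp (fun h => ?_) (fun h => ?_)) <;>
    refine separates_lineThrough_of_orient_mul_neg ?_
  · rw [orient_swap d c a]; linarith
  · rw [orient_swap d a b]; linarith
  · rw [orient_swap d b c]; linarith

lemma IsRectDrawing.orient_ne_zero {V : Type*} {f : V → Pt} (hf : IsRectDrawing f) {a b c : V}
    (hab : a ≠ b) (hac : a ≠ c) (hbc : b ≠ c) : orient (f a) (f b) (f c) ≠ 0 :=
  orient_ne_zero_of_not_collinear <| hf.2.2 _ ⟨a, rfl⟩ _ ⟨b, rfl⟩ _ ⟨c, rfl⟩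
    (hf.1.ne hab) (hf.1.ne hac) (hf.1.ne hbc)

section Counting

open Finset

variable {V : Type*} [DecidableEq V] {f : V → Pt}

def separatingPairs (f : V → Pt) : Sym2 V → Set (Finset V) :=
  Sym2.lift ⟨fun s t => {p | ∃ a b : V, p = {a, b} ∧ a ≠ b ∧ s ∉ p ∧ t ∉ p ∧
      Separates (lineThrough (f a) (f b)) (f s) (f t)},
    fun s t => by
      ext p
      constructor <;> rintro ⟨a, b, rfl, hab, hs, ht, hsep⟩ <;>
        exact ⟨a, b, rfl, hab, ht, hs, hsep.symm⟩⟩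

noncomputable def crossingIncidences [Fintype V] (G : SimpleGraph V) (f : V → Pt) :
    Finset ((_ : Sym2 V) × Finset V) :=
  G.edgeSet.toFinite.toFinset.sigma fun e => (separatingPairs f e).toFinite.toFinset

def incidenceVertices (x : (_ : Sym2 V) × Finset V) : Finset V := x.1.toFinset ∪ x.2

variable [Fintype V] {G : SimpleGraph V}

lemma drawingCrossings_eq_card_crossingIncidences (G : SimpleGraph V) (f : V → Pt) :
    drawingCrossings G f = #(crossingIncidences G f) := by
  rw [crossingIncidences, card_sigma, drawingCrossings]
  refine sum_congr rfl fun e _ => ?_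
  induction e using Sym2.ind with
  | _ s t => exact Set.ncard_eq_toFinset_card _ _

lemma mem_crossingIncidences {x : (_ : Sym2 V) × Finset V} :
    x ∈ crossingIncidences G f ↔ x.1 ∈ G.edgeSet ∧ x.2 ∈ separatingPairs f x.1 := by
  simp [crossingIncidences]

lemma mk_mem_crossingIncidences {a b s t : V} (hst : G.Adj s t) (hab : a ≠ b)
    (hsa : s ≠ a) (hsb : s ≠ b) (hta : t ≠ a) (htb : t ≠ b)
    (h : Separates (lineThrough (f a) (f b)) (f s) (f t)) :
    ⟨s(s, t), {a, b}⟩ ∈ crossingIncidences G f :=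
  mem_crossingIncidences.2 ⟨hst, a, b, rfl, hab, by simp [hsa, hsb], by simp [hta, htb], h⟩

lemma card_snd_of_mem_crossingIncidences {x : (_ : Sym2 V) × Finset V}
    (hx : x ∈ crossingIncidences G f) : #x.2 = 2 := by
  obtain ⟨e, p⟩ := x
  induction e using Sym2.ind with
  | _ s t =>
    obtain ⟨-, a, b, rfl, hab, -⟩ := mem_crossingIncidences.1 hx
    exact card_pair hab

lemma card_incidenceVertices_of_mem {x : (_ : Sym2 V) × Finset V}
    (hx : x ∈ crossingIncidences G f) : #(incidenceVertices x) = 4 := by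
  obtain ⟨e, p⟩ := x
  induction e using Sym2.ind with
  | _ s t =>
    obtain ⟨hst, a, b, rfl, hab, hs, ht, -⟩ := mem_crossingIncidences.1 hx
    rw [incidenceVertices, Sym2.toFinset_mk_eq,
      card_union_of_disjoint (disjoint_insert_left.2 ⟨hs, disjoint_singleton_left.2 ht⟩),
      card_pair (G.ne_of_adj hst), card_pair hab]

lemma exists_mem_crossingIncidences_top (hf : IsRectDrawing f) {Q : Finset V} (hQ : #Q = 4)
    {x : V} (hx : x ∈ Q) :
    ∃ y ∈ crossingIncidences ⊤ f, incidenceVertices y = Q ∧ x ∈ y.2 := by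
  obtain ⟨a, b, c, hab, hac, hbc, hQx⟩ :=
    card_eq_three.1 (show #(Q.erase x) = 3 by rw [card_erase_of_mem hx, hQ])
  have hne : a ≠ x ∧ b ≠ x ∧ c ≠ x := by
    refine ⟨?_, ?_, ?_⟩ <;> exact (mem_erase.1 (by rw [hQx]; simp)).1
  obtain ⟨hxa, hxb, hxc⟩ := hne
  have hQ' : Q = {x, a, b, c} := by rw [← insert_erase hx, hQx]
  subst hQ'
  rcases separates_or_separates_or_separates (hf.orient_ne_zero hxa.symm hxb.symm hab)
    (hf.orient_ne_zero hxb.symm hxc.symm hbc) (hf.orient_ne_zero hxc.symm hxa.symm hac.symm)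
    with h | h | h
  · refine ⟨⟨s(b, c), {x, a}⟩,
      mk_mem_crossingIncidences hbc hxa.symm hxb hab.symm hxc hac.symm h, ?_, by simp⟩
    ext
    simp only [incidenceVertices, Sym2.toFinset_mk_eq, mem_union, mem_insert, mem_singleton]
    tauto
  · refine ⟨⟨s(c, a), {x, b}⟩,
      mk_mem_crossingIncidences hac.symm hxb.symm hxc hbc.symm hxa hab h, ?_, by simp⟩
    ext
    simp only [incidenceVertices, Sym2.toFinset_mk_eq, mem_union, mem_insert, mem_singleton]
    tauto
  · refine ⟨⟨s(a, b), {x, c}⟩, mk_mem_crossingIncidences hab hxc.symm hxa hac hxb hbc h,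
      ?_, by simp⟩
    ext
    simp only [incidenceVertices, Sym2.toFinset_mk_eq, mem_union, mem_insert, mem_singleton]
    tauto

lemma two_le_card_crossingIncidences_filter (hf : IsRectDrawing f) {Q : Finset V}
    (hQ : #Q = 4) : 2 ≤ #{y ∈ crossingIncidences ⊤ f | incidenceVertices y = Q} := by
  obtain ⟨x, hx⟩ : Q.Nonempty := card_pos.1 (by omega)
  obtain ⟨y, hy, hyQ, hxy⟩ := exists_mem_crossingIncidences_top hf hQ hx
  obtain ⟨z, hz, hzy⟩ := exists_mem_notMem_of_card_lt_card
    (show #y.2 < #Q by rw [card_snd_of_mem_crossingIncidences hy, hQ]; norm_num)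
  obtain ⟨y', hy', hy'Q, hzy'⟩ := exists_mem_crossingIncidences_top hf hQ hz
  exact one_lt_card.2 ⟨y, mem_filter.2 ⟨hy, hyQ⟩, y', mem_filter.2 ⟨hy', hy'Q⟩,
    by rintro rfl; exact hzy hzy'⟩

theorem two_mul_choose_four_le_drawingCrossings_top (hf : IsRectDrawing f) :
    2 * (Fintype.card V).choose 4 ≤ drawingCrossings ⊤ f := by
  rw [drawingCrossings_eq_card_crossingIncidences,
    card_eq_sum_card_fiberwise (t := univ.powersetCard 4)
      fun y hy => mem_powersetCard_univ.2 (card_incidenceVertices_of_mem hy)]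
  calc 2 * (Fintype.card V).choose 4 = ∑ _Q ∈ univ.powersetCard 4, 2 := by simp [mul_comm]
    _ ≤ _ := sum_le_sum fun Q hQ =>
      two_le_card_crossingIncidences_filter hf (mem_powersetCard_univ.1 hQ)

end Counting

theorem stmt_1_general (n : ℕ) (f : Fin n → Pt) (hf : IsRectDrawing f) :
    2 * Nat.choose n 4 ≤ drawingCrossings (⊤ : SimpleGraph (Fin n)) f := by
  simpa using two_mul_choose_four_le_drawingCrossings_top hf

/-- For n ≥ 4, every rectilinear drawing of `K_n` has crossing number
at least `2 * C(n,4)`. -/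
theorem stmt_1 (n : ℕ) (hn : 4 ≤ n) (f : Fin n → Pt) (hf : IsRectDrawing f) :
    2 * Nat.choose n 4 ≤ drawingCrossings (⊤ : SimpleGraph (Fin n)) f :=
  stmt_1_general n f hf
end

section
/- For every abstract graph G, the rectilinear crossing number satisfies 2·cr̄(G) ≤ OCN(G), where cr̄(G) is the minimum number of crossing pairs of edges over all rectilinear drawings of G and OCN(G) is the Orchard crossing number of G. -/
set_option linter.unusedSectionVars false

noncomputable section AuxOrchard

/-- The signed-area functional of the line through `p` and `q`. -/
def lineG (p q x : Pt) : ℝ := (q.1 - p.1) * (x.2 - p.2) - (q.2 - p.2) * (x.1 - p.1)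

lemma lineG_continuous (p q : Pt) : Continuous (lineG p q) := by
  unfold lineG; fun_prop

lemma mem_lineThrough_of_lineG {p q x : Pt} (hpq : p ≠ q) (h : lineG p q x = 0) :
    x ∈ lineThrough p q := by
  have hne : q.1 - p.1 ≠ 0 ∨ q.2 - p.2 ≠ 0 := by
    by_contra hc; push_neg at hc
    exact hpq (Prod.ext (by linarith [hc.1]) (by linarith [hc.2])).symm
  unfold lineG at h
  rcases hne with h1 | h2
  · have hx : x = AffineMap.lineMap p q ((x.1 - p.1)/(q.1 - p.1)) := by
      rw [AffineMap.lineMap_apply_module']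
      refine Prod.ext ?_ ?_
      · show x.1 = ((x.1 - p.1)/(q.1 - p.1)) * (q.1 - p.1) + p.1
        field_simp
        ring
      · show x.2 = ((x.1 - p.1)/(q.1 - p.1)) * (q.2 - p.2) + p.2
        field_simp
        linear_combination h
    rw [hx]
    exact AffineMap.lineMap_mem_affineSpan_pair _ _ _
  · have hx : x = AffineMap.lineMap p q ((x.2 - p.2)/(q.2 - p.2)) := by
      rw [AffineMap.lineMap_apply_module']
      refine Prod.ext ?_ ?_
      · show x.1 = ((x.2 - p.2)/(q.2 - p.2)) * (q.1 - p.1) + p.1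
        field_simp
        linear_combination -h
      · show x.2 = ((x.2 - p.2)/(q.2 - p.2)) * (q.2 - p.2) + p.2
        field_simp
        ring
    rw [hx]
    exact AffineMap.lineMap_mem_affineSpan_pair _ _ _

lemma collinear_of_mem_lineThrough {p q x : Pt} (h : x ∈ lineThrough p q) :
    Collinear ℝ ({x, p, q} : Set Pt) :=
  collinear_insert_of_mem_affineSpan_pair h

lemma lineG_combo {p q A B : Pt} {u v : ℝ} (huv : u + v = 1) :
    lineG p q (u • A + v • B) = u * lineG p q A + v * lineG p q B := by
  have hv : v = 1 - u := by linarith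
  subst hv
  simp only [lineG, Prod.fst_add, Prod.snd_add, Prod.smul_fst, Prod.smul_snd, smul_eq_mul]
  ring

lemma separates_of_openSegment {P Q A B : Pt} (hPQ : P ≠ Q)
    (hA : ¬ Collinear ℝ ({A, P, Q} : Set Pt)) (hB : ¬ Collinear ℝ ({B, P, Q} : Set Pt))
    (hx : (openSegment ℝ A B ∩ openSegment ℝ P Q).Nonempty) :
    Separates (lineThrough P Q) A B := by
  set L := lineThrough P Q
  have hAL : A ∉ L := fun h => hA (collinear_of_mem_lineThrough h)
  have hBL : B ∉ L := fun h => hB (collinear_of_mem_lineThrough h)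
  have hgA : lineG P Q A ≠ 0 := fun h => hAL (mem_lineThrough_of_lineG hPQ h)
  have hgB : lineG P Q B ≠ 0 := fun h => hBL (mem_lineThrough_of_lineG hPQ h)
  obtain ⟨x, hx1, hx2⟩ := hx
  obtain ⟨u, v, hu, hv, huv, rfl⟩ := hx1
  obtain ⟨u', v', hu', hv', huv', hx2'⟩ := hx2
  have hgx : lineG P Q (u • A + v • B) = 0 := by
    rw [← hx2', lineG_combo huv']
    have h1 : lineG P Q P = 0 := by simp [lineG]
    have h2 : lineG P Q Q = 0 := by simp [lineG]; ring
    rw [h1, h2]; ring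
  rw [lineG_combo huv] at hgx
  refine ⟨hAL, hBL, fun heq => ?_⟩
  have hAC : A ∈ connectedComponentIn Lᶜ A := mem_connectedComponentIn hAL
  have hBC : B ∈ connectedComponentIn Lᶜ A := by
    rw [heq]; exact mem_connectedComponentIn hBL
  have hpre : IsPreconnected (connectedComponentIn Lᶜ A) := isPreconnected_connectedComponentIn
  have hcont : ContinuousOn (lineG P Q) (connectedComponentIn Lᶜ A) :=
    (lineG_continuous P Q).continuousOn
  have hz : ∃ z ∈ connectedComponentIn Lᶜ A, lineG P Q z = 0 := by
    rcases lt_or_gt_of_ne hgA with h | h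
    · have h0 : (0:ℝ) ∈ Set.Icc (lineG P Q A) (lineG P Q B) := by
        constructor
        · exact le_of_lt h
        · nlinarith
      obtain ⟨z, hzC, hz0⟩ := hpre.intermediate_value hAC hBC hcont h0
      exact ⟨z, hzC, hz0⟩
    · have h0 : (0:ℝ) ∈ Set.Icc (lineG P Q B) (lineG P Q A) := by
        constructor
        · nlinarith
        · exact le_of_lt h
      obtain ⟨z, hzC, hz0⟩ := hpre.intermediate_value hBC hAC hcont h0
      exact ⟨z, hzC, hz0⟩
  obtain ⟨z, hzC, hz0⟩ := hz
  exact (connectedComponentIn_subset _ _ hzC) (mem_lineThrough_of_lineG hPQ hz0)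

lemma collinear_of_openSegment_inter {C A B : Pt}
    (hx : (openSegment ℝ C A ∩ openSegment ℝ C B).Nonempty) :
    Collinear ℝ ({B, C, A} : Set Pt) := by
  obtain ⟨x, hx1, hx2⟩ := hx
  obtain ⟨u₁, v₁, hu₁, hv₁, huv₁, rfl⟩ := hx1
  obtain ⟨u₂, v₂, hu₂, hv₂, huv₂, heq⟩ := hx2
  have e1 : u₁ * C.1 + v₁ * A.1 = u₂ * C.1 + v₂ * B.1 := by
    have := congrArg Prod.fst heq
    simpa [Prod.fst_add, Prod.smul_fst, smul_eq_mul] using this.symm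
  have e2 : u₁ * C.2 + v₁ * A.2 = u₂ * C.2 + v₂ * B.2 := by
    have := congrArg Prod.snd heq
    simpa [Prod.snd_add, Prod.smul_snd, smul_eq_mul] using this.symm
  have hB : B = AffineMap.lineMap C A (v₁ / v₂) := by
    rw [AffineMap.lineMap_apply_module']
    refine Prod.ext ?_ ?_
    · show B.1 = (v₁ / v₂) * (A.1 - C.1) + C.1
      field_simp
      linear_combination -e1 + C.1*huv₁ - C.1*huv₂
    · show B.2 = (v₁ / v₂) * (A.2 - C.2) + C.2
      field_simp
      linear_combination -e2 + C.2*huv₁ - C.2*huv₂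
  exact collinear_insert_of_mem_affineSpan_pair
    (hB ▸ AffineMap.lineMap_mem_affineSpan_pair _ _ _)

variable {V : Type*} [Fintype V] [DecidableEq V]

/-- The vertex set of an unordered pair, as a `Finset`. -/
def vset : Sym2 V → Finset V :=
  Sym2.lift ⟨fun a b => ({a, b} : Finset V), fun a b => Finset.pair_comm a b⟩

lemma sym2_rep (z : Sym2 V) : ∃ s t : V, z = s(s, t) :=
  Sym2.ind (fun x y => ⟨x, y, rfl⟩) z

lemma vset_mk (a b : V) : vset s(a, b) = {a, b} := rfl

lemma edgeSeg_mk (f : V → Pt) (a b : V) : edgeSeg f s(a, b) = openSegment ℝ (f a) (f b) := rfl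

lemma vset_inj {G : SimpleGraph V} {o o' : Sym2 V} (ho : o ∈ G.edgeSet) (ho' : o' ∈ G.edgeSet)
    (h : vset o = vset o') : o = o' := by
  obtain ⟨s, t, rfl⟩ := sym2_rep o
  obtain ⟨s', t', rfl⟩ := sym2_rep o'
  have hst : s ≠ t := ((SimpleGraph.mem_edgeSet _).1 ho).ne
  rw [vset_mk, vset_mk] at h
  have hs : s = s' ∨ s = t' := by
    have : s ∈ ({s', t'} : Finset V) := h ▸ Finset.mem_insert_self s {t}
    simpa using this
  have ht : t = s' ∨ t = t' := by
    have : t ∈ ({s', t'} : Finset V) := h ▸ (by simp : t ∈ ({s, t} : Finset V))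
    simpa using this
  rcases hs with rfl | rfl
  · rcases ht with rfl | rfl
    · exact absurd rfl hst
    · rfl
  · rcases ht with rfl | rfl
    · exact Sym2.eq_swap
    · exact absurd rfl hst

lemma no_shared {f : V → Pt} (hf : IsRectDrawing f) {c x y : V} (hcx : c ≠ x) (hcy : c ≠ y)
    (hxy : x ≠ y) (h : (openSegment ℝ (f c) (f x) ∩ openSegment ℝ (f c) (f y)).Nonempty) :
    False := by
  obtain ⟨hinj, -, hgen⟩ := hf
  have hcol := collinear_of_openSegment_inter h
  exact hgen (f y) ⟨y, rfl⟩ (f c) ⟨c, rfl⟩ (f x) ⟨x, rfl⟩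
    (fun he => hcy (hinj he.symm)) (fun he => hxy (hinj he).symm)
    (fun he => hcx (hinj he)) hcol

theorem two_mul_crossPairs_le (G : SimpleGraph V) (f : V → Pt) (hf : IsRectDrawing f) :
    2 * crossPairs G f ≤ drawingCrossings G f := by
  classical
  obtain ⟨hinj, -, hgen⟩ := id hf
  set E : Finset (Sym2 V) := G.edgeSet.toFinite.toFinset with hE
  set Pset : Set (Finset (Sym2 V)) := {p : Finset (Sym2 V) | ∃ e₁ e₂ : Sym2 V, p = {e₁, e₂} ∧
    e₁ ≠ e₂ ∧ e₁ ∈ G.edgeSet ∧ e₂ ∈ G.edgeSet ∧ (edgeSeg f e₁ ∩ edgeSeg f e₂).Nonempty}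
    with hPset
  set P : Finset (Finset (Sym2 V)) := Pset.toFinite.toFinset with hP
  have hmemP : ∀ p, p ∈ P ↔ p ∈ Pset := fun p => Set.Finite.mem_toFinset _
  have hcp : crossPairs G f = P.card := Set.ncard_eq_toFinset_card _ _
  have decomp : ∀ e, ∀ p ∈ P, e ∈ p → ∃ o : Sym2 V, o ≠ e ∧ o ∈ G.edgeSet ∧
      p.erase e = {o} ∧ (edgeSeg f e ∩ edgeSeg f o).Nonempty := by
    intro e p hp hep
    rw [hmemP] at hp
    obtain ⟨e₁, e₂, rfl, hne, h1, h2, hcr⟩ := hp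
    rcases Finset.mem_insert.1 hep with rfl | hep2
    · refine ⟨e₂, Ne.symm hne, h2, ?_, hcr⟩
      exact Finset.erase_insert (by simpa using hne)
    · rw [Finset.mem_singleton] at hep2
      subst hep2
      refine ⟨e₁, hne, h1, ?_, by rwa [Set.inter_comm]⟩
      rw [Finset.pair_comm]
      exact Finset.erase_insert (by simpa using Ne.symm hne)
  have hsub : ∀ p ∈ P, p ⊆ E := by
    intro p hp
    rw [hmemP] at hp
    obtain ⟨e₁, e₂, rfl, hne, h1, h2, -⟩ := hp
    intro x hx
    rcases Finset.mem_insert.1 hx with rfl | hx2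
    · exact (Set.Finite.mem_toFinset _).2 h1
    · rw [Finset.mem_singleton] at hx2
      subst hx2
      exact (Set.Finite.mem_toFinset _).2 h2
  have hcard2 : ∀ p ∈ P, p.card = 2 := by
    intro p hp
    rw [hmemP] at hp
    obtain ⟨e₁, e₂, rfl, hne, -, -, -⟩ := hp
    exact Finset.card_pair hne
  have main : ∀ e ∈ E, (P.filter (fun p => e ∈ p)).card ≤
      Sym2.lift ⟨fun s t => sepCount f s t, fun s t => sepCount_symm f s t⟩ e := by
    intro e
    induction e using Sym2.ind with
    | _ a b =>
    intro he
    have hadj : G.Adj a b := (SimpleGraph.mem_edgeSet _).1 ((Set.Finite.mem_toFinset _).1 he)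
    have hab : a ≠ b := hadj.ne
    rw [Sym2.lift_mk]
    set S : Set (Finset V) := {e : Finset V | ∃ a' b' : V, e = {a', b'} ∧ a' ≠ b' ∧ a ∉ e ∧
      b ∉ e ∧ Separates (lineThrough (f a') (f b')) (f a) (f b)} with hS
    have hsc : sepCount f a b = S.ncard := rfl
    set Φ : Finset (Sym2 V) → Finset V := fun p => (p.erase s(a, b)).sup vset with hΦ
    have hkey : ∀ p ∈ P.filter (fun p => s(a, b) ∈ p), ∃ o : Sym2 V, o ∈ G.edgeSet ∧
        Φ p = vset o ∧ p = {s(a, b), o} ∧ Φ p ∈ S := by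
      intro p hp
      rw [Finset.mem_filter] at hp
      obtain ⟨o, hone, hoE, herase, hcross⟩ := decomp s(a, b) p hp.1 hp.2
      have hΦp : Φ p = vset o := by rw [hΦ]; simp only; rw [herase, Finset.sup_singleton]
      have hpeq : p = {s(a, b), o} := by
        rw [show ({s(a,b), o} : Finset (Sym2 V)) = insert s(a,b) {o} from rfl, ← herase,
          Finset.insert_erase hp.2]
      refine ⟨o, hoE, hΦp, hpeq, ?_⟩
      obtain ⟨s, t, rfl⟩ := sym2_rep o
      have hadj' : G.Adj s t := (SimpleGraph.mem_edgeSet _).1 hoE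
      have hst : s ≠ t := hadj'.ne
      have hcross' : (openSegment ℝ (f a) (f b) ∩ openSegment ℝ (f s) (f t)).Nonempty := by
        rwa [edgeSeg_mk, edgeSeg_mk] at hcross
      have hsym1 : (openSegment ℝ (f b) (f a) ∩ openSegment ℝ (f s) (f t)).Nonempty := by
        rwa [openSegment_symm]
      have has : a ≠ s := by
        rintro rfl
        exact no_shared hf hab hadj'.ne (fun h => hone (by rw [h])) hcross'
      have hat : a ≠ t := by
        rintro rfl
        refine no_shared hf hab (Ne.symm hst) (fun h => hone ?_) ?_
        · rw [h]; exact Sym2.eq_swap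
        · obtain ⟨x, h1, h2⟩ := hcross'
          exact ⟨x, h1, by rwa [openSegment_symm] at h2⟩
      have hbs : b ≠ s := by
        rintro rfl
        exact no_shared hf (Ne.symm hab) hadj'.ne
          (fun h => hone (by rw [h]; exact Sym2.eq_swap)) hsym1
      have hbt : b ≠ t := by
        rintro rfl
        refine no_shared hf (Ne.symm hab) (Ne.symm hst)
          (fun h => hone (by rw [h])) ?_
        obtain ⟨x, h1, h2⟩ := hsym1
        exact ⟨x, h1, by rwa [openSegment_symm] at h2⟩
      have hfne : ∀ {x y : V}, x ≠ y → f x ≠ f y := fun hxy he => hxy (hinj he)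
      have hsep : Separates (lineThrough (f s) (f t)) (f a) (f b) := by
        refine separates_of_openSegment (hfne hst) ?_ ?_ hcross'
        · exact hgen (f a) ⟨a, rfl⟩ (f s) ⟨s, rfl⟩ (f t) ⟨t, rfl⟩
            (hfne has) (hfne hat) (hfne hst)
        · exact hgen (f b) ⟨b, rfl⟩ (f s) ⟨s, rfl⟩ (f t) ⟨t, rfl⟩
            (hfne hbs) (hfne hbt) (hfne hst)
      rw [hΦp, vset_mk]
      exact ⟨s, t, rfl, hst, by simp [has, hat], by simp [hbs, hbt], hsep⟩
    have hinj : Set.InjOn Φ ↑(P.filter (fun p => s(a, b) ∈ p)) := by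
      intro p hp p' hp' heq
      obtain ⟨o, hoE, hΦp, hpeq, -⟩ := hkey p hp
      obtain ⟨o', hoE', hΦp', hpeq', -⟩ := hkey p' hp'
      rw [hpeq, hpeq', vset_inj hoE hoE' (by rw [← hΦp, ← hΦp', heq])]
    calc (P.filter (fun p => s(a, b) ∈ p)).card
        = ((P.filter (fun p => s(a, b) ∈ p)).image Φ).card :=
          (Finset.card_image_of_injOn hinj).symm
      _ = ((((P.filter (fun p => s(a, b) ∈ p)).image Φ) : Finset (Finset V)) : Set (Finset V)).ncard :=
          (Set.ncard_coe_finset _).symm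
      _ ≤ S.ncard := by
          refine Set.ncard_le_ncard ?_ (Set.toFinite S)
          intro q hq
          rw [Finset.coe_image] at hq
          obtain ⟨p, hp, rfl⟩ := hq
          obtain ⟨o, -, -, -, hmem⟩ := hkey p (by simpa using hp)
          exact hmem
      _ = sepCount f a b := hsc.symm
  calc 2 * crossPairs G f = ∑ _p ∈ P, 2 := by
        rw [hcp, Finset.sum_const, smul_eq_mul, mul_comm]
    _ = ∑ p ∈ P, (E.filter (fun x => x ∈ p)).card := by
        refine Finset.sum_congr rfl (fun p hp => ?_)
        rw [Finset.filter_mem_eq_inter, Finset.inter_eq_right.2 (hsub p hp), hcard2 p hp]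
    _ = ∑ e ∈ E, (P.filter (fun p => e ∈ p)).card := by
        simp_rw [Finset.card_filter]
        exact Finset.sum_comm
    _ ≤ ∑ e ∈ E, Sym2.lift ⟨fun s t => sepCount f s t, fun s t => sepCount_symm f s t⟩ e :=
        Finset.sum_le_sum main
    _ = drawingCrossings G f := by rw [drawingCrossings]

end AuxOrchard


/-- For every abstract graph `G`, `2 * cr̄(G) ≤ OCN(G)`. -/
theorem stmt_3 {V : Type*} [Fintype V] [DecidableEq V] (G : SimpleGraph V) :
    2 * rcr G ≤ OCN G := by
  classical
  by_cases hne : {n | ∃ f : V → Pt, IsRectDrawing f ∧ drawingCrossings G f = n}.Nonempty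
  · obtain ⟨f, hf, hfe⟩ := Nat.sInf_mem hne
    have h1 : rcr G ≤ crossPairs G f := Nat.sInf_le ⟨f, hf, rfl⟩
    calc 2 * rcr G ≤ 2 * crossPairs G f := by omega
      _ ≤ drawingCrossings G f := two_mul_crossPairs_le G f hf
      _ = OCN G := hfe
  · have h0 : OCN G = 0 := by
      rw [Set.not_nonempty_iff_eq_empty] at hne
      rw [OCN, hne, Nat.sInf_empty]
    have h0' : rcr G = 0 := by
      have hemp : {n | ∃ f : V → Pt, IsRectDrawing f ∧ crossPairs G f = n} = ∅ := by
        rw [Set.eq_empty_iff_forall_notMem]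
        rintro n ⟨f, hf, -⟩
        exact hne ⟨drawingCrossings G f, f, hf, rfl⟩
      rw [rcr, hemp, Nat.sInf_empty]
    omega
end

section
/- For every natural number n and every rectilinear drawing of the star graph K_{n,1} with black points b_1,…,b_n and center (white point) w, let L_i be the line through b_i and w and let k_i be the number of black points on one fixed side of L_i (so n−1−k_i lie on the other side). Then the crossing number of the drawing is at least (1/2)·Σ_{i=1}^n [ C(k_i,2) + C(n−1−k_i,2) ]. -/
set_option linter.unusedSectionVars false

set_option maxHeartbeats 1000000

/-! ### Auxiliary machinery for statement 6 -/

noncomputable section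

open Classical in
/-- orientation determinant -/
def dd (p q r : Pt) : ℝ := (q.1 - p.1) * (r.2 - p.2) - (q.2 - p.2) * (r.1 - p.1)

theorem collinear_dd {s : Set Pt} (h : Collinear ℝ s) {p q r : Pt}
    (hp : p ∈ s) (hq : q ∈ s) (hr : r ∈ s) : dd p q r = 0 := by
  obtain ⟨v, hv⟩ := (collinear_iff_of_mem hp).1 h
  obtain ⟨a, ha⟩ := hv q hq
  obtain ⟨b, hb⟩ := hv r hr
  subst ha hb
  simp only [dd, vadd_eq_add, Prod.fst_add, Prod.snd_add, Prod.smul_fst, Prod.smul_snd,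
    smul_eq_mul]
  ring

theorem smul_mem_line (t : ℝ) (p q : Pt) : t • (q - p) + p ∈ lineThrough p q := by
  have := smul_vsub_vadd_mem_affineSpan_pair t p q
  simpa [lineThrough, vsub_eq_sub, vadd_eq_add] using this

theorem dd_eq_zero_of_mem {p q x : Pt} (h : x ∈ lineThrough p q) : dd p q x = 0 := by
  have hcol : Collinear ℝ ({x, p, q} : Set Pt) :=
    collinear_insert_of_mem_affineSpan_pair (k := ℝ) (p₁ := x) (p₂ := p) (p₃ := q) h
  exact collinear_dd hcol (by simp) (by simp) (by simp)

theorem mem_of_dd_eq_zero {p q x : Pt} (hpq : p ≠ q) (h : dd p q x = 0) :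
    x ∈ lineThrough p q := by
  have hne : q.1 - p.1 ≠ 0 ∨ q.2 - p.2 ≠ 0 := by
    by_contra hc
    push_neg at hc
    exact hpq (by ext <;> [nlinarith [hc.1]; nlinarith [hc.2]])
  have hcross : (x.1 - p.1) * (q.2 - p.2) = (q.1 - p.1) * (x.2 - p.2) := by
    unfold dd at h; nlinarith [h]
  rcases hne with hne | hne
  · have key : x = ((x.1 - p.1)/(q.1 - p.1)) • (q - p) + p := by
      ext
      · simp only [Prod.fst_add, Prod.smul_fst, Prod.fst_sub, smul_eq_mul]; field_simp; ring
      · simp only [Prod.snd_add, Prod.smul_snd, Prod.snd_sub, smul_eq_mul]; field_simp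
        nlinarith [hcross]
    rw [key]; exact smul_mem_line _ p q
  · have key : x = ((x.2 - p.2)/(q.2 - p.2)) • (q - p) + p := by
      ext
      · simp only [Prod.fst_add, Prod.smul_fst, Prod.fst_sub, smul_eq_mul]; field_simp
        nlinarith [hcross]
      · simp only [Prod.snd_add, Prod.smul_snd, Prod.snd_sub, smul_eq_mul]; field_simp; ring
    rw [key]; exact smul_mem_line _ p q

theorem line_eq_dd_zero {p q : Pt} (hpq : p ≠ q) :
    lineThrough p q = {x | dd p q x = 0} :=
  Set.ext fun _ => ⟨dd_eq_zero_of_mem, mem_of_dd_eq_zero hpq⟩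

section topo
variable {p q : Pt}

theorem dd_continuous (p q : Pt) : Continuous (fun x : Pt => dd p q x) := by
  unfold dd; fun_prop

theorem dd_convex_pos (p q : Pt) : Convex ℝ {x : Pt | 0 < dd p q x} := by
  intro x hx y hy a b ha hb hab
  simp only [Set.mem_setOf_eq] at hx hy ⊢
  have hb' : b = 1 - a := by linarith
  have hdd : dd p q (a • x + b • y) = a * dd p q x + b * dd p q y := by
    subst hb'
    simp only [dd, Prod.fst_add, Prod.snd_add, Prod.smul_fst, Prod.smul_snd, smul_eq_mul]
    ring
  rw [hdd]
  rcases eq_or_lt_of_le ha with ha' | ha'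
  · have : b = 1 := by linarith
    subst this; rw [← ha']; simpa using hy
  · nlinarith

theorem dd_convex_neg (p q : Pt) : Convex ℝ {x : Pt | dd p q x < 0} := by
  intro x hx y hy a b ha hb hab
  simp only [Set.mem_setOf_eq] at hx hy ⊢
  have hb' : b = 1 - a := by linarith
  have hdd : dd p q (a • x + b • y) = a * dd p q x + b * dd p q y := by
    subst hb'
    simp only [dd, Prod.fst_add, Prod.snd_add, Prod.smul_fst, Prod.smul_snd, smul_eq_mul]
    ring
  rw [hdd]
  rcases eq_or_lt_of_le ha with ha' | ha'
  · have : b = 1 := by linarith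
    subst this; rw [← ha']; simpa using hy
  · nlinarith

theorem comp_eq_pos (hpq : p ≠ q) {X : Pt} (hX : 0 < dd p q X) :
    connectedComponentIn (lineThrough p q)ᶜ X = {x | 0 < dd p q x} := by
  have hLc : (lineThrough p q)ᶜ = {x | dd p q x ≠ 0} := by
    rw [line_eq_dd_zero hpq]; rfl
  have hSopen : IsOpen {x : Pt | 0 < dd p q x} := isOpen_lt continuous_const (dd_continuous p q)
  have hNopen : IsOpen {x : Pt | dd p q x < 0} := isOpen_lt (dd_continuous p q) continuous_const
  apply Set.Subset.antisymm
  · refine isPreconnected_connectedComponentIn.subset_left_of_subset_union hSopen hNopen ?_ ?_ ?_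
    · rw [Set.disjoint_left]
      intro x h1 h2
      simp only [Set.mem_setOf_eq] at h1 h2
      exact absurd (lt_trans h2 h1) (lt_irrefl _)
    · intro x hx
      have := connectedComponentIn_subset (lineThrough p q)ᶜ X hx
      rw [hLc] at this
      rcases lt_or_gt_of_ne this with h | h
      · exact Or.inr h
      · exact Or.inl h
    · refine ⟨X, ?_, hX⟩
      apply mem_connectedComponentIn
      rw [hLc]; exact ne_of_gt hX
  · apply IsPreconnected.subset_connectedComponentIn
    · exact (dd_convex_pos p q).isPreconnected
    · exact hX
    · intro x hx
      rw [hLc]; exact ne_of_gt hx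

theorem comp_eq_neg (hpq : p ≠ q) {X : Pt} (hX : dd p q X < 0) :
    connectedComponentIn (lineThrough p q)ᶜ X = {x | dd p q x < 0} := by
  have hLc : (lineThrough p q)ᶜ = {x | dd p q x ≠ 0} := by
    rw [line_eq_dd_zero hpq]; rfl
  have hSopen : IsOpen {x : Pt | 0 < dd p q x} := isOpen_lt continuous_const (dd_continuous p q)
  have hNopen : IsOpen {x : Pt | dd p q x < 0} := isOpen_lt (dd_continuous p q) continuous_const
  apply Set.Subset.antisymm
  · refine isPreconnected_connectedComponentIn.subset_left_of_subset_union hNopen hSopen ?_ ?_ ?_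
    · rw [Set.disjoint_left]
      intro x h1 h2
      simp only [Set.mem_setOf_eq] at h1 h2
      exact absurd (lt_trans h1 h2) (lt_irrefl _)
    · intro x hx
      have := connectedComponentIn_subset (lineThrough p q)ᶜ X hx
      rw [hLc] at this
      rcases lt_or_gt_of_ne this with h | h
      · exact Or.inl h
      · exact Or.inr h
    · refine ⟨X, ?_, hX⟩
      apply mem_connectedComponentIn
      rw [hLc]; exact ne_of_lt hX
  · apply IsPreconnected.subset_connectedComponentIn
    · exact (dd_convex_neg p q).isPreconnected
    · exact hX
    · intro x hx
      rw [hLc]; exact ne_of_lt hx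

theorem comp_eq_iff (hpq : p ≠ q) {X Y : Pt} (hX : dd p q X ≠ 0) (hY : dd p q Y ≠ 0) :
    connectedComponentIn (lineThrough p q)ᶜ X = connectedComponentIn (lineThrough p q)ᶜ Y ↔
      0 < dd p q X * dd p q Y := by
  have hposneg : ({x : Pt | 0 < dd p q x} : Set Pt) ≠ {x | dd p q x < 0} := by
    intro h
    rcases lt_or_gt_of_ne hX with h1 | h1
    · have : X ∈ {x : Pt | dd p q x < 0} := h1
      rw [← h] at this
      exact absurd (lt_trans this h1) (lt_irrefl _)
    · have : X ∈ {x : Pt | 0 < dd p q x} := h1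
      rw [h] at this
      exact absurd (lt_trans h1 this) (lt_irrefl _)
  rcases lt_or_gt_of_ne hX with h1 | h1 <;> rcases lt_or_gt_of_ne hY with h2 | h2
  · rw [comp_eq_neg hpq h1, comp_eq_neg hpq h2]
    exact iff_of_true rfl (mul_pos_of_neg_of_neg h1 h2)
  · rw [comp_eq_neg hpq h1, comp_eq_pos hpq h2]
    constructor
    · intro h; exact absurd h.symm hposneg
    · intro h; nlinarith
  · rw [comp_eq_pos hpq h1, comp_eq_neg hpq h2]
    constructor
    · intro h; exact absurd h hposneg
    · intro h; nlinarith
  · rw [comp_eq_pos hpq h1, comp_eq_pos hpq h2]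
    exact iff_of_true rfl (mul_pos h1 h2)

theorem separates_iff (hpq : p ≠ q) {X Y : Pt} (hX : dd p q X ≠ 0) (hY : dd p q Y ≠ 0) :
    Separates (lineThrough p q) X Y ↔ dd p q X * dd p q Y < 0 := by
  have hXL : X ∉ lineThrough p q := by rw [line_eq_dd_zero hpq]; exact hX
  have hYL : Y ∉ lineThrough p q := by rw [line_eq_dd_zero hpq]; exact hY
  constructor
  · rintro ⟨-, -, hne⟩
    rcases lt_or_gt_of_ne (mul_ne_zero hX hY) with h | h
    · exact h
    · exact absurd ((comp_eq_iff hpq hX hY).2 h) hne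
  · intro h
    refine ⟨hXL, hYL, ?_⟩
    intro heq
    have := (comp_eq_iff hpq hX hY).1 heq
    nlinarith
end topo

theorem absCount (u v t S : ℝ) (hu : u ≠ 0) (hv : v ≠ 0) (ht : t ≠ 0) (hS : S ≠ 0) :
    ((if u * t < 0 then 1 else 0) + (if u * t < 0 then 1 else 0) +
     (if u * v < 0 then 1 else 0) + (if u * v < 0 then 1 else 0) +
     (if t * v < 0 then 1 else 0) + (if t * v < 0 then 1 else 0) : ℕ) ≤
    2 * ((if v * S < 0 then 1 else 0) + (if v * S < 0 then 1 else 0) +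
     (if t * S < 0 then 1 else 0) + (if t * S < 0 then 1 else 0) +
     (if u * S < 0 then 1 else 0) + (if u * S < 0 then 1 else 0)) := by
  rcases lt_or_gt_of_ne hu with hu | hu <;> rcases lt_or_gt_of_ne hv with hv | hv <;>
    rcases lt_or_gt_of_ne ht with ht | ht <;> rcases lt_or_gt_of_ne hS with hS | hS <;>
    simp [mul_neg_iff, hu, hv, ht, hS, asymm hu, asymm hv, asymm ht, asymm hS]

theorem signPair {a b e : ℝ} (ha : a ≠ 0) (hb : b ≠ 0) (he : e ≠ 0) :
    0 < a * b ↔ ((0 < a * e ∧ 0 < b * e) ∨ (a * e < 0 ∧ b * e < 0)) := by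
  rcases lt_or_gt_of_ne ha with ha | ha <;> rcases lt_or_gt_of_ne hb with hb | hb <;>
    rcases lt_or_gt_of_ne he with he | he <;>
    simp [mul_pos_iff, mul_neg_iff, ha, hb, he, asymm ha, asymm hb, asymm he]

theorem keyTriple (w p q r : Pt) (h1 : dd w p q ≠ 0) (h2 : dd w q r ≠ 0)
    (h3 : dd w r p ≠ 0) (h4 : dd p q r ≠ 0) :
    ((if 0 < dd p w q * dd p w r then 1 else 0) + (if 0 < dd p w r * dd p w q then 1 else 0) +
     (if 0 < dd q w p * dd q w r then 1 else 0) + (if 0 < dd q w r * dd q w p then 1 else 0) +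
     (if 0 < dd r w p * dd r w q then 1 else 0) + (if 0 < dd r w q * dd r w p then 1 else 0) : ℕ)
    ≤ 2 * ((if dd q r w * dd q r p < 0 then 1 else 0) + (if dd r q w * dd r q p < 0 then 1 else 0) +
     (if dd p r w * dd p r q < 0 then 1 else 0) + (if dd r p w * dd r p q < 0 then 1 else 0) +
     (if dd p q w * dd p q r < 0 then 1 else 0) + (if dd q p w * dd q p r < 0 then 1 else 0)) := by
  set u := dd w p q with hu
  set v := dd w q r with hv
  set t := dd w r p with ht
  set S := dd p q r with hS
  have e1 : dd p w q * dd p w r = -(u * t) := by simp only [hu, ht, dd]; ring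
  have e2 : dd p w r * dd p w q = -(u * t) := by simp only [hu, ht, dd]; ring
  have e3 : dd q w p * dd q w r = -(u * v) := by simp only [hu, hv, dd]; ring
  have e4 : dd q w r * dd q w p = -(u * v) := by simp only [hu, hv, dd]; ring
  have e5 : dd r w p * dd r w q = -(t * v) := by simp only [ht, hv, dd]; ring
  have e6 : dd r w q * dd r w p = -(t * v) := by simp only [ht, hv, dd]; ring
  have f1 : dd q r w * dd q r p = v * S := by simp only [hv, hS, dd]; ring
  have f2 : dd r q w * dd r q p = v * S := by simp only [hv, hS, dd]; ring
  have f3 : dd p r w * dd p r q = t * S := by simp only [ht, hS, dd]; ring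
  have f4 : dd r p w * dd r p q = t * S := by simp only [ht, hS, dd]; ring
  have f5 : dd p q w * dd p q r = u * S := by simp only [hu, hS, dd]; ring
  have f6 : dd q p w * dd q p r = u * S := by simp only [hu, hS, dd]; ring
  rw [e1, e2, e3, e4, e5, e6, f1, f2, f3, f4, f5, f6]
  simp only [neg_pos]
  exact absCount u v t S h1 h2 h3 h4

theorem two_mul_choose_two (m : ℕ) : m.choose 2 * 2 = m * (m - 1) := by
  induction m with
  | zero => rfl
  | succ m ih =>
    rw [Nat.choose_succ_succ, Nat.add_mul, ih, Nat.choose_one_right]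
    cases m with
    | zero => rfl
    | succ m' =>
      simp only [Nat.succ_sub_one]
      ring

theorem mul_self_sub_self (m : ℕ) : m * m - m = m * (m - 1) := by
  cases m with
  | zero => rfl
  | succ k =>
    simp only [Nat.succ_sub_one]
    have : (k + 1) * (k + 1) = (k + 1) * k + (k + 1) := by ring
    omega

open Classical in
/-- indicator for "j and l on the same side of the line through the center and b_i" -/
def e1fun (n : ℕ) (f : Fin (n + 1) → Pt) (a b c : Fin n) : ℕ :=
  if (b ≠ c ∧ b ≠ a ∧ c ≠ a ∧
      0 < dd (f a.succ) (f 0) (f b.succ) * dd (f a.succ) (f 0) (f c.succ)) then 1 else 0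

open Classical in
/-- indicator for "the line through b_j and b_l separates the center from b_i" -/
def e2fun (n : ℕ) (f : Fin (n + 1) → Pt) (a b c : Fin n) : ℕ :=
  if (b ≠ c ∧ b ≠ a ∧ c ≠ a ∧
      dd (f b.succ) (f c.succ) (f 0) * dd (f b.succ) (f c.succ) (f a.succ) < 0) then 1 else 0

theorem pointwise6 (n : ℕ) (f : Fin (n + 1) → Pt)
    (hnc : ∀ x y z : Fin (n + 1), x ≠ y → x ≠ z → y ≠ z → dd (f x) (f y) (f z) ≠ 0)
    (i j l : Fin n) :
    e1fun n f i j l + e1fun n f i l j + e1fun n f j i l + e1fun n f j l i +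
      e1fun n f l i j + e1fun n f l j i ≤
    2 * (e2fun n f i j l + e2fun n f i l j + e2fun n f j i l + e2fun n f j l i +
      e2fun n f l i j + e2fun n f l j i) := by
  by_cases hij : i = j
  · subst hij; simp [e1fun, e2fun]
  by_cases hil : i = l
  · subst hil; simp [e1fun, e2fun]
  by_cases hjl : j = l
  · subst hjl; simp [e1fun, e2fun]
  have hij' : j ≠ i := Ne.symm hij
  have hil' : l ≠ i := Ne.symm hil
  have hjl' : l ≠ j := Ne.symm hjl
  have hs0 : ∀ a : Fin n, a.succ ≠ (0 : Fin (n + 1)) := fun a => Fin.succ_ne_zero a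
  have hsucc : ∀ a b : Fin n, a ≠ b → a.succ ≠ b.succ := fun a b h =>
    fun hc => h (Fin.succ_injective n hc)
  have h1 : dd (f 0) (f i.succ) (f j.succ) ≠ 0 :=
    hnc 0 i.succ j.succ (hs0 i).symm (hs0 j).symm (hsucc i j hij)
  have h2 : dd (f 0) (f j.succ) (f l.succ) ≠ 0 :=
    hnc 0 j.succ l.succ (hs0 j).symm (hs0 l).symm (hsucc j l hjl)
  have h3 : dd (f 0) (f l.succ) (f i.succ) ≠ 0 :=
    hnc 0 l.succ i.succ (hs0 l).symm (hs0 i).symm (hsucc l i hil')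
  have h4 : dd (f i.succ) (f j.succ) (f l.succ) ≠ 0 :=
    hnc i.succ j.succ l.succ (hsucc i j hij) (hsucc i l hil) (hsucc j l hjl)
  have := keyTriple (f 0) (f i.succ) (f j.succ) (f l.succ) h1 h2 h3 h4
  simp only [e1fun, e2fun, hij, hil, hjl, hij', hil', hjl', ne_eq, not_false_iff, true_and,
    not_true, false_and, if_false]
  convert this using 2

end

theorem dd_collinear {p q r : Pt} (h : dd p q r = 0) : Collinear ℝ ({p, q, r} : Set Pt) := by
  by_cases hpq : p = q
  · subst hpq
    rw [Set.insert_idem]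
    exact collinear_pair ℝ p r
  · have hmem : r ∈ lineThrough p q := mem_of_dd_eq_zero hpq h
    have hcol := collinear_insert_of_mem_affineSpan_pair (k := ℝ) hmem
    have hset : ({p, q, r} : Set Pt) = {r, p, q} := by
      ext x; simp only [Set.mem_insert_iff, Set.mem_singleton_iff]; tauto
    rw [hset]; exact hcol

/-- For every drawing of the star `K_{n,1}` (center `0`, black points
`1, …, n`), if `k i` is the number of black points on one fixed side of the line `L_i`
through the `i`-th black point and the center, then the crossing number of the drawing
is at least `(1/2) Σ_i (C(k_i, 2) + C(n-1-k_i, 2))`. -/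
theorem stmt_6 (n : ℕ) (f : Fin (n + 1) → Pt) (hf : IsRectDrawing f)
    (k : Fin n → ℕ)
    (hk : ∀ i : Fin n, ∃ P : Pt, P ∉ lineThrough (f i.succ) (f 0) ∧
      k i = Set.ncard {j : Fin n | j ≠ i ∧
        connectedComponentIn (lineThrough (f i.succ) (f 0))ᶜ (f j.succ) =
          connectedComponentIn (lineThrough (f i.succ) (f 0))ᶜ P}) :
    ∑ i : Fin n, (Nat.choose (k i) 2 + Nat.choose (n - 1 - k i) 2) ≤
      2 * drawingCrossings (starGraph n) f := by
  classical
  obtain ⟨hinj, hfin, hgen⟩ := hf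
  have hnc : ∀ x y z : Fin (n + 1), x ≠ y → x ≠ z → y ≠ z → dd (f x) (f y) (f z) ≠ 0 := by
    intro x y z hxy hxz hyz h0
    exact hgen (f x) ⟨x, rfl⟩ (f y) ⟨y, rfl⟩ (f z) ⟨z, rfl⟩
      (fun h => hxy (hinj h)) (fun h => hxz (hinj h)) (fun h => hyz (hinj h))
      (dd_collinear h0)
  have hsucc : ∀ a b : Fin n, a ≠ b → a.succ ≠ b.succ := fun a b h hc =>
    h (Fin.succ_injective n hc)
  -- Step A: the drawing crossing number is the sum of the sepCounts over the edges.
  have hedge : drawingCrossings (starGraph n) f = ∑ i : Fin n, sepCount f 0 i.succ := by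
    unfold drawingCrossings
    have hes : (starGraph n).edgeSet = {e | ∃ i : Fin n, e = s((0 : Fin (n + 1)), i.succ)} := by
      rw [starGraph, SimpleGraph.edgeSet_fromEdgeSet]
      ext e
      simp only [Set.mem_diff, Set.mem_setOf_eq]
      constructor
      · rintro ⟨h, -⟩; exact h
      · rintro ⟨i, rfl⟩
        refine ⟨⟨i, rfl⟩, ?_⟩
        simp only [Sym2.mem_diagSet, Sym2.mk_isDiag_iff]
        exact (Fin.succ_ne_zero i).symm
    have hfs : (starGraph n).edgeSet.toFinite.toFinset =
        Finset.image (fun i : Fin n => s((0 : Fin (n + 1)), i.succ)) Finset.univ := by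
      ext e
      simp only [Set.Finite.mem_toFinset, hes, Set.mem_setOf_eq, Finset.mem_image,
        Finset.mem_univ, true_and]
      constructor
      · rintro ⟨i, rfl⟩; exact ⟨i, rfl⟩
      · rintro ⟨i, rfl⟩; exact ⟨i, rfl⟩
    rw [hfs, Finset.sum_image]
    · rfl
    · intro a _ b _ hab
      rw [Sym2.eq_iff] at hab
      rcases hab with ⟨-, h⟩ | ⟨h, -⟩
      · exact Fin.succ_injective n h
      · exact absurd h.symm (Fin.succ_ne_zero b)
  -- Step B: per-i identity for the left-hand side.
  have mainB : ∀ i : Fin n,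
      (Nat.choose (k i) 2 + Nat.choose (n - 1 - k i) 2) * 2 =
        ∑ j : Fin n, ∑ l : Fin n, e1fun n f i j l := by
    intro i
    obtain ⟨P, hPL, hkP⟩ := hk i
    have hpq : f i.succ ≠ f 0 := fun h => Fin.succ_ne_zero i (hinj h)
    have hE : dd (f i.succ) (f 0) P ≠ 0 := fun h0 => hPL (mem_of_dd_eq_zero hpq h0)
    have ccnz : ∀ j : Fin n, j ≠ i → dd (f i.succ) (f 0) (f j.succ) ≠ 0 := by
      intro j hji
      exact hnc i.succ 0 j.succ (Fin.succ_ne_zero i) (hsucc i j (Ne.symm hji))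
        (Fin.succ_ne_zero j).symm
    set s : Finset (Fin n) := Finset.univ.filter (fun j => j ≠ i) with hs
    set Kp : Finset (Fin n) :=
      s.filter (fun j => 0 < dd (f i.succ) (f 0) (f j.succ) * dd (f i.succ) (f 0) P) with hKp
    set Kn : Finset (Fin n) :=
      s.filter (fun j => ¬ 0 < dd (f i.succ) (f 0) (f j.succ) * dd (f i.succ) (f 0) P) with hKn
    have hKnlt : ∀ j ∈ Kn, dd (f i.succ) (f 0) (f j.succ) * dd (f i.succ) (f 0) P < 0 := by
      intro j hj
      rw [hKn, Finset.mem_filter, hs, Finset.mem_filter] at hj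
      obtain ⟨⟨-, hji⟩, hnp⟩ := hj
      exact lt_of_le_of_ne (le_of_not_gt hnp) (mul_ne_zero (ccnz j hji) hE)
    have hKpcard : Kp.card = k i := by
      rw [hkP]
      have hset : {j : Fin n | j ≠ i ∧
          connectedComponentIn (lineThrough (f i.succ) (f 0))ᶜ (f j.succ) =
            connectedComponentIn (lineThrough (f i.succ) (f 0))ᶜ P} = ↑Kp := by
        ext j
        rw [Set.mem_setOf_eq, Finset.mem_coe, hKp, Finset.mem_filter, hs, Finset.mem_filter]
        simp only [Finset.mem_univ, true_and]
        constructor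
        · rintro ⟨hji, hcomp⟩
          exact ⟨hji, (comp_eq_iff hpq (ccnz j hji) hE).1 hcomp⟩
        · rintro ⟨hji, hlt⟩
          exact ⟨hji, (comp_eq_iff hpq (ccnz j hji) hE).2 hlt⟩
      rw [hset, Set.ncard_coe_finset]
    have hsplit : Kp.card + Kn.card = s.card :=
      Finset.card_filter_add_card_filter_not _
    have hscard : s.card = n - 1 := by
      rw [hs, Finset.filter_ne', Finset.card_erase_of_mem (Finset.mem_univ i),
        Finset.card_univ, Fintype.card_fin]
    have hKncard : Kn.card = n - 1 - k i := by omega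
    have hdisj : Disjoint Kp.offDiag Kn.offDiag := by
      rw [Finset.disjoint_left]
      rintro ⟨j, l⟩ h1 h2
      rw [Finset.mem_offDiag] at h1 h2
      have hjp := h1.1
      have hjn := h2.1
      rw [hKp, Finset.mem_filter] at hjp
      rw [hKn, Finset.mem_filter] at hjn
      exact hjn.2 hjp.2
    have hunion : (Finset.univ ×ˢ Finset.univ).filter (fun pr : Fin n × Fin n =>
        pr.1 ≠ pr.2 ∧ pr.1 ≠ i ∧ pr.2 ≠ i ∧
          0 < dd (f i.succ) (f 0) (f pr.1.succ) * dd (f i.succ) (f 0) (f pr.2.succ)) =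
        Kp.offDiag ∪ Kn.offDiag := by
      have hKpM : ∀ m : Fin n, (m ∈ Kp ↔ m ≠ i ∧
          0 < dd (f i.succ) (f 0) (f m.succ) * dd (f i.succ) (f 0) P) := by
        intro m
        rw [hKp, Finset.mem_filter, hs, Finset.mem_filter]
        simp only [Finset.mem_univ, true_and]
      have hKnM : ∀ m : Fin n, (m ∈ Kn ↔ m ≠ i ∧
          ¬ 0 < dd (f i.succ) (f 0) (f m.succ) * dd (f i.succ) (f 0) P) := by
        intro m
        rw [hKn, Finset.mem_filter, hs, Finset.mem_filter]
        simp only [Finset.mem_univ, true_and]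
      ext ⟨j, l⟩
      rw [Finset.mem_filter, Finset.mem_union, Finset.mem_offDiag, Finset.mem_offDiag]
      constructor
      · rintro ⟨-, hjl, hji, hli, hpos⟩
        rcases (signPair (ccnz j hji) (ccnz l hli) hE).1 hpos with ⟨h1, h2⟩ | ⟨h1, h2⟩
        · exact Or.inl ⟨(hKpM j).2 ⟨hji, h1⟩, (hKpM l).2 ⟨hli, h2⟩, hjl⟩
        · exact Or.inr ⟨(hKnM j).2 ⟨hji, fun hc => absurd h1 (asymm hc)⟩,
            (hKnM l).2 ⟨hli, fun hc => absurd h2 (asymm hc)⟩, hjl⟩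
      · intro h
        refine ⟨Finset.mem_product.2 ⟨Finset.mem_univ _, Finset.mem_univ _⟩, ?_⟩
        rcases h with ⟨hj, hl, hjl⟩ | ⟨hj, hl, hjl⟩
        · obtain ⟨hji, h1⟩ := (hKpM j).1 hj
          obtain ⟨hli, h2⟩ := (hKpM l).1 hl
          exact ⟨hjl, hji, hli, (signPair (ccnz j hji) (ccnz l hli) hE).2 (Or.inl ⟨h1, h2⟩)⟩
        · obtain ⟨hji, h1⟩ := (hKnM j).1 hj
          obtain ⟨hli, h2⟩ := (hKnM l).1 hl
          refine ⟨hjl, hji, hli, (signPair (ccnz j hji) (ccnz l hli) hE).2 (Or.inr ⟨?_, ?_⟩)⟩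
          · exact lt_of_le_of_ne (le_of_not_gt h1) (mul_ne_zero (ccnz j hji) hE)
          · exact lt_of_le_of_ne (le_of_not_gt h2) (mul_ne_zero (ccnz l hli) hE)
    have hsum : ∑ j : Fin n, ∑ l : Fin n, e1fun n f i j l =
        ((Finset.univ ×ˢ Finset.univ).filter (fun pr : Fin n × Fin n =>
          pr.1 ≠ pr.2 ∧ pr.1 ≠ i ∧ pr.2 ≠ i ∧
            0 < dd (f i.succ) (f 0) (f pr.1.succ) * dd (f i.succ) (f 0) (f pr.2.succ))).card := by
      rw [Finset.card_filter, Finset.sum_product]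
      refine Finset.sum_congr rfl fun j _ => Finset.sum_congr rfl fun l _ => ?_
      simp only [e1fun]
    rw [hsum, hunion, Finset.card_union_of_disjoint hdisj, Finset.offDiag_card,
      Finset.offDiag_card, mul_self_sub_self, mul_self_sub_self, hKpcard, hKncard,
      Nat.add_mul, two_mul_choose_two, two_mul_choose_two]
  -- Step C: per-i bound for the right-hand side.
  have mainC : ∀ i : Fin n,
      ∑ j : Fin n, ∑ l : Fin n, e2fun n f i j l ≤ 2 * sepCount f 0 i.succ := by
    intro i
    set F2 : Finset (Fin n × Fin n) := (Finset.univ ×ˢ Finset.univ).filter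
      (fun pr : Fin n × Fin n => pr.1 ≠ pr.2 ∧ pr.1 ≠ i ∧ pr.2 ≠ i ∧
        dd (f pr.1.succ) (f pr.2.succ) (f 0) * dd (f pr.1.succ) (f pr.2.succ) (f i.succ) < 0)
      with hF2
    have hsum : ∑ j : Fin n, ∑ l : Fin n, e2fun n f i j l = F2.card := by
      rw [hF2, Finset.card_filter, Finset.sum_product]
      refine Finset.sum_congr rfl fun j _ => Finset.sum_congr rfl fun l _ => ?_
      simp only [e2fun]
    set φ : Fin n × Fin n → Finset (Fin (n + 1)) := fun pr => {pr.1.succ, pr.2.succ} with hφ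
    have hmem2 : ∀ a : Fin n × Fin n, ∀ pr : Fin n × Fin n, φ a = φ pr →
        (a.1.succ = pr.1.succ ∨ a.1.succ = pr.2.succ) ∧
        (a.2.succ = pr.1.succ ∨ a.2.succ = pr.2.succ) := by
      intro a pr haφ
      constructor
      · have ha1 : a.1.succ ∈ φ a := by simp [hφ]
        rw [haφ] at ha1
        simpa [hφ] using ha1
      · have ha2 : a.2.succ ∈ φ a := by simp [hφ]
        rw [haφ] at ha2
        simpa [hφ] using ha2
    have hfiber : F2.card ≤ 2 * (F2.image φ).card := by
      apply Finset.card_le_mul_card_image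
      intro b hb
      obtain ⟨pr, hpr, rfl⟩ := Finset.mem_image.1 hb
      have hsub : F2.filter (fun a => φ a = φ pr) ⊆ {pr, (pr.2, pr.1)} := by
        intro a ha
        rw [Finset.mem_filter] at ha
        obtain ⟨haF, haφ⟩ := ha
        have ha12 : a.1 ≠ a.2 := by
          rw [hF2, Finset.mem_filter] at haF
          exact haF.2.1
        obtain ⟨h1, h2⟩ := hmem2 a pr haφ
        simp only [Finset.mem_insert, Finset.mem_singleton]
        rcases h1 with h1 | h1 <;> rcases h2 with h2 | h2
        · exact absurd (Fin.succ_injective n (h1.trans h2.symm)) ha12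
        · left
          exact Prod.ext (Fin.succ_injective n h1) (Fin.succ_injective n h2)
        · right
          exact Prod.ext (Fin.succ_injective n h1) (Fin.succ_injective n h2)
        · exact absurd (Fin.succ_injective n (h1.trans h2.symm)) ha12
      calc (F2.filter (fun a => φ a = φ pr)).card ≤ ({pr, (pr.2, pr.1)} : Finset _).card :=
            Finset.card_le_card hsub
        _ ≤ 2 := by
            apply le_trans (Finset.card_insert_le _ _)
            simp
    have himg : (F2.image φ).card ≤ sepCount f 0 i.succ := by
      unfold sepCount
      rw [← Set.ncard_coe_finset]
      apply Set.ncard_le_ncard ?_ (Set.toFinite _)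
      intro e he
      simp only [Finset.coe_image, Set.mem_image, Finset.mem_coe] at he
      obtain ⟨pr, hpr, rfl⟩ := he
      rw [hF2, Finset.mem_filter] at hpr
      obtain ⟨-, hne, h1i, h2i, hsep⟩ := hpr
      have hd1 : dd (f pr.1.succ) (f pr.2.succ) (f 0) ≠ 0 := by
        intro h0; rw [h0, zero_mul] at hsep; exact lt_irrefl 0 hsep
      have hd2 : dd (f pr.1.succ) (f pr.2.succ) (f i.succ) ≠ 0 := by
        intro h0; rw [h0, mul_zero] at hsep; exact lt_irrefl 0 hsep
      have hpq' : f pr.1.succ ≠ f pr.2.succ := fun h =>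
        hne (Fin.succ_injective n (hinj h))
      refine ⟨pr.1.succ, pr.2.succ, rfl, hsucc pr.1 pr.2 hne, ?_, ?_, ?_⟩
      · intro hmem
        rcases Finset.mem_insert.1 hmem with h | h
        · exact Fin.succ_ne_zero pr.1 h.symm
        · exact Fin.succ_ne_zero pr.2 (Finset.mem_singleton.1 h).symm
      · intro hmem
        rcases Finset.mem_insert.1 hmem with h | h
        · exact h1i (Fin.succ_injective n h.symm)
        · exact h2i (Fin.succ_injective n (Finset.mem_singleton.1 h).symm)
      · exact (separates_iff hpq' hd1 hd2).2 hsep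
    omega
  -- Step D: the permutation double count.
  have mainD : (∑ i : Fin n, ∑ j : Fin n, ∑ l : Fin n, e1fun n f i j l) ≤
      2 * ∑ i : Fin n, ∑ j : Fin n, ∑ l : Fin n, e2fun n f i j l := by
    have hp : ∀ G : Fin n → Fin n → Fin n → ℕ,
        (∑ x : Fin n × Fin n × Fin n, G x.1 x.2.1 x.2.2) =
          ∑ i : Fin n, ∑ j : Fin n, ∑ l : Fin n, G i j l := by
      intro G
      rw [← Finset.univ_product_univ, Finset.sum_product]
      refine Finset.sum_congr rfl fun i _ => ?_
      rw [← Finset.univ_product_univ, Finset.sum_product]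
    have hps : ∀ (G : Fin n → Fin n → Fin n → ℕ)
        (σ : (Fin n × Fin n × Fin n) ≃ (Fin n × Fin n × Fin n)),
        (∑ x : Fin n × Fin n × Fin n, G (σ x).1 (σ x).2.1 (σ x).2.2) =
          ∑ x : Fin n × Fin n × Fin n, G x.1 x.2.1 x.2.2 := by
      intro G σ
      exact Equiv.sum_comp σ (fun x => G x.1 x.2.1 x.2.2)
    let σ2 : (Fin n × Fin n × Fin n) ≃ (Fin n × Fin n × Fin n) :=
      ⟨fun x => (x.1, x.2.2, x.2.1), fun x => (x.1, x.2.2, x.2.1), fun x => rfl, fun x => rfl⟩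
    let σ3 : (Fin n × Fin n × Fin n) ≃ (Fin n × Fin n × Fin n) :=
      ⟨fun x => (x.2.1, x.1, x.2.2), fun x => (x.2.1, x.1, x.2.2), fun x => rfl, fun x => rfl⟩
    let σ4 : (Fin n × Fin n × Fin n) ≃ (Fin n × Fin n × Fin n) :=
      ⟨fun x => (x.2.1, x.2.2, x.1), fun x => (x.2.2, x.1, x.2.1), fun x => rfl, fun x => rfl⟩
    let σ5 : (Fin n × Fin n × Fin n) ≃ (Fin n × Fin n × Fin n) :=
      ⟨fun x => (x.2.2, x.1, x.2.1), fun x => (x.2.1, x.2.2, x.1), fun x => rfl, fun x => rfl⟩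
    let σ6 : (Fin n × Fin n × Fin n) ≃ (Fin n × Fin n × Fin n) :=
      ⟨fun x => (x.2.2, x.2.1, x.1), fun x => (x.2.2, x.2.1, x.1), fun x => rfl, fun x => rfl⟩
    have big : (∑ x : Fin n × Fin n × Fin n,
        (e1fun n f x.1 x.2.1 x.2.2 + e1fun n f x.1 x.2.2 x.2.1 + e1fun n f x.2.1 x.1 x.2.2 +
         e1fun n f x.2.1 x.2.2 x.1 + e1fun n f x.2.2 x.1 x.2.1 + e1fun n f x.2.2 x.2.1 x.1)) ≤
        ∑ x : Fin n × Fin n × Fin n,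
        2 * (e2fun n f x.1 x.2.1 x.2.2 + e2fun n f x.1 x.2.2 x.2.1 + e2fun n f x.2.1 x.1 x.2.2 +
         e2fun n f x.2.1 x.2.2 x.1 + e2fun n f x.2.2 x.1 x.2.1 + e2fun n f x.2.2 x.2.1 x.1) :=
      Finset.sum_le_sum fun x _ => pointwise6 n f hnc x.1 x.2.1 x.2.2
    have hL : (∑ x : Fin n × Fin n × Fin n,
        (e1fun n f x.1 x.2.1 x.2.2 + e1fun n f x.1 x.2.2 x.2.1 + e1fun n f x.2.1 x.1 x.2.2 +
         e1fun n f x.2.1 x.2.2 x.1 + e1fun n f x.2.2 x.1 x.2.1 + e1fun n f x.2.2 x.2.1 x.1)) =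
        6 * ∑ i : Fin n, ∑ j : Fin n, ∑ l : Fin n, e1fun n f i j l := by
      simp only [Finset.sum_add_distrib]
      rw [hp (e1fun n f)]
      rw [show (∑ x : Fin n × Fin n × Fin n, e1fun n f x.1 x.2.2 x.2.1) =
        ∑ x : Fin n × Fin n × Fin n, e1fun n f x.1 x.2.1 x.2.2 from hps (e1fun n f) σ2]
      rw [show (∑ x : Fin n × Fin n × Fin n, e1fun n f x.2.1 x.1 x.2.2) =
        ∑ x : Fin n × Fin n × Fin n, e1fun n f x.1 x.2.1 x.2.2 from hps (e1fun n f) σ3]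
      rw [show (∑ x : Fin n × Fin n × Fin n, e1fun n f x.2.1 x.2.2 x.1) =
        ∑ x : Fin n × Fin n × Fin n, e1fun n f x.1 x.2.1 x.2.2 from hps (e1fun n f) σ4]
      rw [show (∑ x : Fin n × Fin n × Fin n, e1fun n f x.2.2 x.1 x.2.1) =
        ∑ x : Fin n × Fin n × Fin n, e1fun n f x.1 x.2.1 x.2.2 from hps (e1fun n f) σ5]
      rw [show (∑ x : Fin n × Fin n × Fin n, e1fun n f x.2.2 x.2.1 x.1) =
        ∑ x : Fin n × Fin n × Fin n, e1fun n f x.1 x.2.1 x.2.2 from hps (e1fun n f) σ6]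
      rw [hp (e1fun n f)]
      ring
    have hR : (∑ x : Fin n × Fin n × Fin n,
        2 * (e2fun n f x.1 x.2.1 x.2.2 + e2fun n f x.1 x.2.2 x.2.1 + e2fun n f x.2.1 x.1 x.2.2 +
         e2fun n f x.2.1 x.2.2 x.1 + e2fun n f x.2.2 x.1 x.2.1 + e2fun n f x.2.2 x.2.1 x.1)) =
        2 * (6 * ∑ i : Fin n, ∑ j : Fin n, ∑ l : Fin n, e2fun n f i j l) := by
      rw [← Finset.mul_sum]
      congr 1
      simp only [Finset.sum_add_distrib]
      rw [hp (e2fun n f)]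
      rw [show (∑ x : Fin n × Fin n × Fin n, e2fun n f x.1 x.2.2 x.2.1) =
        ∑ x : Fin n × Fin n × Fin n, e2fun n f x.1 x.2.1 x.2.2 from hps (e2fun n f) σ2]
      rw [show (∑ x : Fin n × Fin n × Fin n, e2fun n f x.2.1 x.1 x.2.2) =
        ∑ x : Fin n × Fin n × Fin n, e2fun n f x.1 x.2.1 x.2.2 from hps (e2fun n f) σ3]
      rw [show (∑ x : Fin n × Fin n × Fin n, e2fun n f x.2.1 x.2.2 x.1) =
        ∑ x : Fin n × Fin n × Fin n, e2fun n f x.1 x.2.1 x.2.2 from hps (e2fun n f) σ4]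
      rw [show (∑ x : Fin n × Fin n × Fin n, e2fun n f x.2.2 x.1 x.2.1) =
        ∑ x : Fin n × Fin n × Fin n, e2fun n f x.1 x.2.1 x.2.2 from hps (e2fun n f) σ5]
      rw [show (∑ x : Fin n × Fin n × Fin n, e2fun n f x.2.2 x.2.1 x.1) =
        ∑ x : Fin n × Fin n × Fin n, e2fun n f x.1 x.2.1 x.2.2 from hps (e2fun n f) σ6]
      rw [hp (e2fun n f)]
      ring
    rw [hL, hR] at big
    omega
  -- Combine everything.
  have hA : (∑ i : Fin n, (Nat.choose (k i) 2 + Nat.choose (n - 1 - k i) 2)) * 2 =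
      ∑ i : Fin n, ∑ j : Fin n, ∑ l : Fin n, e1fun n f i j l := by
    rw [Finset.sum_mul]
    exact Finset.sum_congr rfl fun i _ => mainB i
  have hC : (∑ i : Fin n, ∑ j : Fin n, ∑ l : Fin n, e2fun n f i j l) ≤
      2 * ∑ i : Fin n, sepCount f 0 i.succ := by
    rw [Finset.mul_sum]
    exact Finset.sum_le_sum fun i _ => mainC i
  rw [hedge]
  omega
end

section
/- For every natural number n ≥ 5 and every rectilinear drawing R of the wheel graph W_{n,1}, the crossing number satisfies n(R(W_{n,1})) ≥ OCN(K_{n,1}) + n, where OCN(K_{n,1}) denotes the Orchard crossing number of the star graph on n+1 vertices. -/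
set_option linter.unusedSectionVars false

noncomputable section
set_option linter.dupNamespace false
set_option maxHeartbeats 1000000
namespace Aux9

/-- planar determinant -/
def detv (A B X : Pt) : ℝ := (B.1 - A.1) * (X.2 - A.2) - (B.2 - A.2) * (X.1 - A.1)

lemma detv_cyc (A B C : Pt) : detv A B C = detv B C A := by
  simp only [detv]; ring

lemma detv_swap (A B C : Pt) : detv A B C = - detv B A C := by
  simp only [detv]; ring

lemma detv_self (A B : Pt) : detv A B B = 0 := by simp only [detv]; ring

lemma detv_self' (A B : Pt) : detv A B A = 0 := by simp only [detv]; ring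

lemma exists_smul_of_cross_zero {u v : Pt} (hu : u ≠ 0) (h : u.1 * v.2 - u.2 * v.1 = 0) :
    ∃ t : ℝ, v = t • u := by
  rcases eq_or_ne u.1 0 with h1 | h1
  · have h2 : u.2 ≠ 0 := by
      intro h2; exact hu (Prod.ext h1 h2)
    refine ⟨v.2 / u.2, ?_⟩
    have : v.1 = v.2 / u.2 * u.1 := by
      field_simp
      nlinarith [h]
    exact Prod.ext (by simpa using this) (by simp only [Prod.smul_snd, smul_eq_mul]; rw [div_mul_cancel₀ _ h2])
  · refine ⟨v.1 / u.1, ?_⟩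
    have : v.2 = v.1 / u.1 * u.2 := by
      field_simp; nlinarith [h]
    exact Prod.ext (by simp only [Prod.smul_fst, smul_eq_mul]; rw [div_mul_cancel₀ _ h1]) (by simpa using this)

/-- the zero set of `detv A B` is an affine subspace -/
def zeroSub (A B : Pt) : AffineSubspace ℝ Pt where
  carrier := {x : Pt | detv A B x = 0}
  smul_vsub_vadd_mem' := by
    intro c p1 p2 p3 h1 h2 h3
    simp only [Set.mem_setOf_eq, detv] at *
    have hc : (c • (p1 -ᵥ p2) +ᵥ p3 : Pt) = (c * (p1.1 - p2.1) + p3.1, c * (p1.2 - p2.2) + p3.2) := rfl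
    rw [hc]
    dsimp only
    linear_combination c * h1 - c * h2 + h3

lemma zeroSub_prop (A B : Pt) {X : Pt} (hX : X ∈ lineThrough A B) : detv A B X = 0 := by
  have hle : affineSpan ℝ ({A, B} : Set Pt) ≤ zeroSub A B := by
    apply affineSpan_le.2
    intro x hx
    simp only [Set.mem_insert_iff, Set.mem_singleton_iff] at hx
    show detv A B x = 0
    rcases hx with h | h
    · rw [h]; exact detv_self' A B
    · rw [h]; exact detv_self A B
  exact hle hX

lemma mem_lineThrough_iff {A B : Pt} (hAB : A ≠ B) {X : Pt} :
    X ∈ lineThrough A B ↔ detv A B X = 0 := by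
  constructor
  · intro hX
    exact zeroSub_prop A B hX
  · intro hX
    have hu : (B - A : Pt) ≠ 0 := sub_ne_zero.2 (Ne.symm hAB)
    have hc : (B - A : Pt).1 * (X - A).2 - (B - A : Pt).2 * (X - A).1 = 0 := by
      simp only [detv] at hX
      simp only [Prod.fst_sub, Prod.snd_sub]
      linarith [hX]
    obtain ⟨t, ht⟩ := exists_smul_of_cross_zero hu hc
    have hX' : X = AffineMap.lineMap A B t := by
      have : X - A = t • (B - A) := ht
      have h2 : X = t • (B - A) + A := by
        have h3 := congrArg (· + A) this
        simpa [sub_add_cancel] using h3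
      rw [h2]
      simp only [AffineMap.lineMap_apply, vsub_eq_sub, vadd_eq_add]
    rw [hX']
    exact AffineMap.lineMap_mem_affineSpan_pair t A B

lemma convex_pos (a b c : ℝ) : Convex ℝ {x : Pt | 0 < a * x.1 + b * x.2 + c} := by
  intro x hx y hy s t hs ht hst
  simp only [Set.mem_setOf_eq] at *
  have : a * (s • x + t • y : Pt).1 + b * (s • x + t • y : Pt).2 + c
      = s * (a * x.1 + b * x.2 + c) + t * (a * y.1 + b * y.2 + c) := by
    simp only [Prod.fst_add, Prod.snd_add, Prod.smul_fst, Prod.smul_snd, smul_eq_mul]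
    linear_combination (-c) * hst
  rw [this]
  rcases eq_or_lt_of_le hs with rfl | hs'
  · simpa using mul_pos (by linarith : (0:ℝ) < t) hy
  · rcases eq_or_lt_of_le ht with rfl | ht'
    · simpa using mul_pos hs' hx
    · nlinarith [mul_pos hs' hx, mul_pos ht' hy]

lemma detv_affine_form (A B : Pt) :
    ∀ X : Pt, detv A B X = (-(B.2 - A.2)) * X.1 + (B.1 - A.1) * X.2 +
      ((B.2 - A.2) * A.1 - (B.1 - A.1) * A.2) := by
  intro X; simp only [detv]; ring

lemma same_component {L U : Set Pt} (hU : Convex ℝ U) (hUL : U ⊆ Lᶜ) {P Q : Pt}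
    (hP : P ∈ U) (hQ : Q ∈ U) :
    connectedComponentIn Lᶜ P = connectedComponentIn Lᶜ Q := by
  have h1 := hU.isPreconnected.subset_connectedComponentIn hP hUL
  exact (connectedComponentIn_eq (h1 hQ)).symm ▸ rfl

lemma not_sep_of_same_side {A B P Q : Pt} (hAB : A ≠ B)
    (h : 0 < detv A B P * detv A B Q) : ¬ Separates (lineThrough A B) P Q := by
  rintro ⟨hP, hQ, hcomp⟩
  apply hcomp
  rcases mul_pos_iff.1 h with ⟨h1, h2⟩ | ⟨h1, h2⟩
  · -- both positive
    have hform := detv_affine_form A B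
    set a := -(B.2 - A.2); set b := (B.1 - A.1)
    set c := ((B.2 - A.2) * A.1 - (B.1 - A.1) * A.2)
    have hU : Convex ℝ {x : Pt | 0 < a * x.1 + b * x.2 + c} := convex_pos a b c
    apply same_component hU ?_ (by rw [Set.mem_setOf_eq, ← hform]; exact h1)
      (by rw [Set.mem_setOf_eq, ← hform]; exact h2)
    intro x hx
    simp only [Set.mem_setOf_eq] at hx
    simp only [Set.mem_compl_iff]
    intro hmem
    rw [mem_lineThrough_iff hAB] at hmem
    rw [hform x] at hmem
    rw [hmem] at hx
    exact lt_irrefl 0 hx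
  · -- both negative
    have hform : ∀ X : Pt, - detv A B X = (B.2 - A.2) * X.1 + (-(B.1 - A.1)) * X.2 +
        (-((B.2 - A.2) * A.1 - (B.1 - A.1) * A.2)) := by
      intro X; simp only [detv]; ring
    set a := (B.2 - A.2); set b := -(B.1 - A.1)
    set c := -((B.2 - A.2) * A.1 - (B.1 - A.1) * A.2)
    have hU : Convex ℝ {x : Pt | 0 < a * x.1 + b * x.2 + c} := convex_pos a b c
    apply same_component hU ?_ (by rw [Set.mem_setOf_eq, ← hform]; linarith)
      (by rw [Set.mem_setOf_eq, ← hform]; linarith)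
    intro x hx
    simp only [Set.mem_setOf_eq] at hx
    simp only [Set.mem_compl_iff]
    intro hmem
    rw [mem_lineThrough_iff hAB] at hmem
    rw [← hform x, hmem] at hx
    simp at hx

lemma continuous_detv (A B : Pt) : Continuous (fun X : Pt => detv A B X) := by
  unfold detv; fun_prop

lemma sep_of_opposite_side {A B P Q : Pt} (hAB : A ≠ B)
    (h : detv A B P * detv A B Q < 0) : Separates (lineThrough A B) P Q := by
  have hP0 : detv A B P ≠ 0 := by intro h0; rw [h0] at h; simp at h
  have hQ0 : detv A B Q ≠ 0 := by intro h0; rw [h0] at h; simp at h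
  refine ⟨?_, ?_, ?_⟩
  · intro hmem; exact hP0 ((mem_lineThrough_iff hAB).1 hmem)
  · intro hmem; exact hQ0 ((mem_lineThrough_iff hAB).1 hmem)
  · intro hcomp
    have hPL : P ∈ (lineThrough A B)ᶜ := fun hmem => hP0 ((mem_lineThrough_iff hAB).1 hmem)
    have hQL : Q ∈ (lineThrough A B)ᶜ := fun hmem => hQ0 ((mem_lineThrough_iff hAB).1 hmem)
    have hPK : P ∈ connectedComponentIn (lineThrough A B)ᶜ P := mem_connectedComponentIn hPL
    have hQK : Q ∈ connectedComponentIn (lineThrough A B)ᶜ P := by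
      rw [hcomp]; exact mem_connectedComponentIn hQL
    set K := connectedComponentIn (lineThrough A B)ᶜ P with hK
    have hKpre : IsPreconnected K := isPreconnected_connectedComponentIn
    have hKsub : K ⊆ (lineThrough A B)ᶜ := connectedComponentIn_subset _ _
    have hcont : ContinuousOn (fun X : Pt => detv A B X) K := (continuous_detv A B).continuousOn
    have : ∃ z ∈ K, detv A B z = 0 := by
      rcases mul_neg_iff.1 h with ⟨h1, h2⟩ | ⟨h1, h2⟩
      · have := hKpre.intermediate_value hQK hPK hcont
        have h0 : (0:ℝ) ∈ Set.Icc (detv A B Q) (detv A B P) := ⟨le_of_lt h2, le_of_lt h1⟩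
        obtain ⟨z, hz, hz0⟩ := this h0
        exact ⟨z, hz, hz0⟩
      · have := hKpre.intermediate_value hPK hQK hcont
        have h0 : (0:ℝ) ∈ Set.Icc (detv A B P) (detv A B Q) := ⟨le_of_lt h1, le_of_lt h2⟩
        obtain ⟨z, hz, hz0⟩ := this h0
        exact ⟨z, hz, hz0⟩
    obtain ⟨z, hzK, hz0⟩ := this
    exact (hKsub hzK) ((mem_lineThrough_iff hAB).2 hz0)

lemma sep_opposite {A B P Q : Pt} (hAB : A ≠ B) (h : Separates (lineThrough A B) P Q) :
    detv A B P * detv A B Q < 0 := by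
  have hP0 : detv A B P ≠ 0 := fun h0 => h.1 ((mem_lineThrough_iff hAB).2 h0)
  have hQ0 : detv A B Q ≠ 0 := fun h0 => h.2.1 ((mem_lineThrough_iff hAB).2 h0)
  rcases lt_trichotomy (detv A B P * detv A B Q) 0 with hlt | heq | hgt
  · exact hlt
  · exact absurd heq (mul_ne_zero hP0 hQ0)
  · exact absurd h (not_sep_of_same_side hAB hgt)




lemma detv_swap23 (A B C : Pt) : detv A C B = - detv A B C := by
  simp only [detv]; ring

lemma detv_anti (H P Q : Pt) : detv H Q P = - detv H P Q := by
  simp only [detv]; ring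

lemma collinear_of_detv_eq_zero {p q r : Pt} (hpq : p ≠ q) (h : detv p q r = 0) :
    Collinear ℝ ({p, q, r} : Set Pt) := by
  have hr : r ∈ lineThrough p q := (mem_lineThrough_iff hpq).2 h
  have := collinear_insert_of_mem_affineSpan_pair hr
  apply this.subset
  intro w hw
  simp only [Set.mem_insert_iff, Set.mem_singleton_iff] at hw ⊢
  tauto

lemma detv_ne_zero_of_not_collinear {p q r : Pt}
    (h : ¬ Collinear ℝ ({p, q, r} : Set Pt)) : detv p q r ≠ 0 := by
  intro h0
  rcases eq_or_ne p q with rfl | hpq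
  · apply h
    have : ({p, p, r} : Set Pt) = {p, r} := by
      ext w; simp only [Set.mem_insert_iff, Set.mem_singleton_iff]; tauto
    rw [this]
    exact collinear_pair ℝ p r
  · exact h (collinear_of_detv_eq_zero hpq h0)

lemma detv_combo {A B x : Pt} (s : Finset Pt) (w : Pt → ℝ) (hw1 : ∑ y ∈ s, w y = 1)
    (hx : ∑ y ∈ s, w y • y = x) : detv A B x = ∑ y ∈ s, w y * detv A B y := by
  have h1 : x.1 = ∑ y ∈ s, w y * y.1 := by
    rw [← hx, Prod.fst_sum]
    exact Finset.sum_congr rfl (fun y _ => rfl)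
  have h2 : x.2 = ∑ y ∈ s, w y * y.2 := by
    rw [← hx, Prod.snd_sum]
    exact Finset.sum_congr rfl (fun y _ => rfl)
  rw [detv_affine_form A B x, h1, h2]
  rw [Finset.mul_sum, Finset.mul_sum]
  have hc : ((B.2 - A.2) * A.1 - (B.1 - A.1) * A.2)
      = ∑ y ∈ s, w y * ((B.2 - A.2) * A.1 - (B.1 - A.1) * A.2) := by
    rw [← Finset.sum_mul, hw1, one_mul]
  rw [hc, ← Finset.sum_add_distrib, ← Finset.sum_add_distrib]
  apply Finset.sum_congr rfl
  intro y _
  rw [detv_affine_form A B y]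
  ring

section Drawing

variable {n : ℕ} (f : Fin (n + 1) → Pt)

lemma interior_one_side (hinj : Function.Injective f)
    (hgen : ∀ i j k : Fin (n+1), i ≠ j → i ≠ k → j ≠ k → detv (f i) (f j) (f k) ≠ 0)
    (hhub : f 0 ∈ convexHull ℝ (Set.range (fun i : Fin n => f i.succ)))
    (x : Fin n) (ε : ℝ) (hε : ε ≠ 0)
    (hside : ∀ j : Fin n, j ≠ x → ε * detv (f 0) (f x.succ) (f j.succ) ≤ 0) : False := by
  classical
  set A := f 0 with hA
  set B := f x.succ with hB
  have hAB : A ≠ B := by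
    intro h
    exact (Fin.succ_ne_zero x) (hinj h.symm)
  set s : Finset Pt := Finset.image (fun i : Fin n => f i.succ) Finset.univ with hs
  have hrange : (Set.range (fun i : Fin n => f i.succ)) = (↑s : Set Pt) := by
    rw [hs, Finset.coe_image, Finset.coe_univ, Set.image_univ]
  rw [hrange] at hhub
  obtain ⟨w, hw0, hw1, hcomb⟩ := Finset.mem_convexHull'.1 hhub
  have hzero : (0:ℝ) = ∑ y ∈ s, w y * (ε * detv A B y) := by
    have hcd : detv A B A = 0 := detv_self' A B
    have hsum := detv_combo (A := A) (B := B) s w hw1 hcomb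
    rw [hcd] at hsum
    calc (0:ℝ) = ε * 0 := by ring
    _ = ε * ∑ y ∈ s, w y * detv A B y := by rw [hsum]
    _ = ∑ y ∈ s, w y * (ε * detv A B y) := by rw [Finset.mul_sum]; exact Finset.sum_congr rfl (fun y _ => by ring)
  have hterms : ∀ y ∈ s, w y * (ε * detv A B y) ≤ 0 := by
    intro y hy
    obtain ⟨j, _, rfl⟩ := Finset.mem_image.1 hy
    by_cases hj : j = x
    · subst hj
      rw [← hB, detv_self]
      simp
    · exact mul_nonpos_of_nonneg_of_nonpos (hw0 _ hy) (hside j hj)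
  have hallzero : ∀ y ∈ s, w y * (ε * detv A B y) = 0 := by
    intro y hy
    exact (Finset.sum_eq_zero_iff_of_nonpos hterms).1 hzero.symm y hy
  have hwzero : ∀ y ∈ s, y ≠ B → w y = 0 := by
    intro y hy hyB
    obtain ⟨j, _, rfl⟩ := Finset.mem_image.1 hy
    have hj : j ≠ x := by
      intro h; apply hyB; rw [h, ← hB]
    have hdet : detv A B (f j.succ) ≠ 0 := by
      rw [hA, hB]
      apply hgen 0 x.succ j.succ
      · exact (Fin.succ_ne_zero x).symm
      · exact (Fin.succ_ne_zero j).symm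
      · intro h; exact hj (Fin.succ_injective n h).symm
    rcases mul_eq_zero.1 (hallzero _ hy) with h | h
    · exact h
    · exact absurd (mul_eq_zero.1 h) (by push_neg; exact ⟨hε, hdet⟩)
  have hBs : B ∈ s := Finset.mem_image.2 ⟨x, Finset.mem_univ x, rfl⟩
  have hAeqB : A = B := by
    rw [← hcomb]
    have h1 : ∑ y ∈ s, w y • y = w B • B := by
      apply Finset.sum_eq_single_of_mem B hBs
      intro y hy hne
      rw [hwzero y hy hne, zero_smul]
    have h2 : w B = 1 := by
      rw [← hw1]
      symm
      apply Finset.sum_eq_single_of_mem B hBs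
      intro y hy hne
      exact hwzero y hy hne
    rw [h1, h2, one_smul]
  exact hAB hAeqB

lemma interior_both_sides (hinj : Function.Injective f)
    (hgen : ∀ i j k : Fin (n+1), i ≠ j → i ≠ k → j ≠ k → detv (f i) (f j) (f k) ≠ 0)
    (hhub : f 0 ∈ convexHull ℝ (Set.range (fun i : Fin n => f i.succ)))
    (x : Fin n) :
    (∃ j, j ≠ x ∧ 0 < detv (f 0) (f x.succ) (f j.succ)) ∧
    (∃ j, j ≠ x ∧ detv (f 0) (f x.succ) (f j.succ) < 0) := by
  constructor
  · by_contra h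
    push_neg at h
    refine interior_one_side f hinj hgen hhub x 1 one_ne_zero (fun j hj => ?_)
    have := h j hj
    linarith
  · by_contra h
    push_neg at h
    refine interior_one_side f hinj hgen hhub x (-1) (by norm_num) (fun j hj => ?_)
    have := h j hj
    linarith

lemma detv_rot (P Q R : Pt) : detv P Q R = detv R P Q := by
  simp only [detv]; ring

lemma exterior_triple (hinj : Function.Injective f)
    (hgen : ∀ i j k : Fin (n+1), i ≠ j → i ≠ k → j ≠ k → detv (f i) (f j) (f k) ≠ 0)
    (hext : f 0 ∉ convexHull ℝ (Set.range (fun i : Fin n => f i.succ)))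
    {x y z : Fin n} (hxy : x ≠ y) (hxz : x ≠ z) (hyz : y ≠ z) :
    detv (f x.succ) (f y.succ) (f 0) * detv (f x.succ) (f y.succ) (f z.succ) < 0 ∨
    detv (f y.succ) (f z.succ) (f 0) * detv (f y.succ) (f z.succ) (f x.succ) < 0 ∨
    detv (f x.succ) (f z.succ) (f 0) * detv (f x.succ) (f z.succ) (f y.succ) < 0 := by
  by_contra hcon
  push_neg at hcon
  obtain ⟨h1, h2, h3⟩ := hcon
  have hsx : x.succ ≠ y.succ := fun h => hxy (Fin.succ_injective n h)
  have hsxz : x.succ ≠ z.succ := fun h => hxz (Fin.succ_injective n h)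
  have hsyz : y.succ ≠ z.succ := fun h => hyz (Fin.succ_injective n h)
  have hD : detv (f x.succ) (f y.succ) (f z.succ) ≠ 0 := hgen x.succ y.succ z.succ hsx hsxz hsyz
  have hγ : detv (f x.succ) (f y.succ) (f 0) ≠ 0 := by
    rw [detv_rot]
    exact hgen 0 x.succ y.succ (Fin.succ_ne_zero x).symm (Fin.succ_ne_zero y).symm hsx
  have hα : detv (f y.succ) (f z.succ) (f 0) ≠ 0 := by
    rw [detv_rot]
    exact hgen 0 y.succ z.succ (Fin.succ_ne_zero y).symm (Fin.succ_ne_zero z).symm hsyz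
  have hβ' : detv (f x.succ) (f z.succ) (f 0) ≠ 0 := by
    rw [detv_rot]
    exact hgen 0 x.succ z.succ (Fin.succ_ne_zero x).symm (Fin.succ_ne_zero z).symm hsxz
  set a := f x.succ
  set b := f y.succ
  set c := f z.succ
  set H := f 0
  -- positive products
  have p1 : 0 < detv a b H * detv a b c :=
    lt_of_le_of_ne h1 (Ne.symm (mul_ne_zero hγ hD))
  have p2 : 0 < detv b c H * detv a b c := by
    have hcyc : detv b c a = detv a b c := (detv_cyc a b c).symm
    have hne : detv b c a ≠ 0 := by rw [hcyc]; exact hD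
    have := lt_of_le_of_ne h2 (Ne.symm (mul_ne_zero hα hne))
    rw [hcyc] at this
    exact this
  have p3 : 0 < detv c a H * detv a b c := by
    have hswap : detv a c b = - detv a b c := detv_swap23 a b c
    have hne : detv a c b ≠ 0 := by rw [hswap]; simpa using hD
    have h3' := lt_of_le_of_ne h3 (Ne.symm (mul_ne_zero hβ' hne))
    have hswap2 : detv a c H = - detv c a H := by
      rw [detv_swap c a H]; ring
    rw [hswap, hswap2] at h3'
    nlinarith [h3']
  -- barycentric identity
  set D := detv a b c with hDdef
  set α := detv b c H with hαdef
  set β := detv c a H with hβdef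
  set γ := detv a b H with hγdef
  have hsum : α + β + γ = D := by
    rw [hαdef, hβdef, hγdef, hDdef]
    simp only [detv]; ring
  have hbary : (D * α) • a + (D * β) • b + (D * γ) • c = (D * D) • H := by
    apply Prod.ext
    · simp only [Prod.fst_add, Prod.smul_fst, smul_eq_mul]
      rw [hαdef, hβdef, hγdef, hDdef]
      simp only [detv]; ring
    · simp only [Prod.snd_add, Prod.smul_snd, smul_eq_mul]
      rw [hαdef, hβdef, hγdef, hDdef]
      simp only [detv]; ring
  have hwpos : 0 < D * D := mul_self_pos.2 hD
  -- H in convex hull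
  apply hext
  have hmem := Finset.centerMass_mem_convexHull (t := (Finset.univ : Finset (Fin 3)))
    (w := ![D * α, D * β, D * γ]) (z := ![a, b, c])
    (s := Set.range (fun i : Fin n => f i.succ))
    ?_ ?_ ?_
  rotate_left
  · intro i _
    fin_cases i
    · simpa using le_of_lt (by nlinarith [p2] : (0:ℝ) < D * α)
    · simpa using le_of_lt (by nlinarith [p3] : (0:ℝ) < D * β)
    · simpa using le_of_lt (by nlinarith [p1] : (0:ℝ) < D * γ)
  · rw [Fin.sum_univ_three]
    simp only [Matrix.cons_val_zero, Matrix.cons_val_one, Matrix.head_cons, Matrix.cons_val_two, Matrix.tail_cons]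
    nlinarith [hsum, hwpos]
  · intro i _
    fin_cases i
    · exact ⟨x, by simp; rfl⟩
    · exact ⟨y, by simp; rfl⟩
    · exact ⟨z, by simp; rfl⟩
  · -- centerMass equals H
    have hcm : (Finset.univ : Finset (Fin 3)).centerMass ![D * α, D * β, D * γ] ![a, b, c] = H := by
      rw [Finset.centerMass]
      rw [Fin.sum_univ_three, Fin.sum_univ_three]
      simp only [Matrix.cons_val_zero, Matrix.cons_val_one, Matrix.head_cons, Matrix.cons_val_two, Matrix.tail_cons]
      have hsumw : D * α + D * β + D * γ = D * D := by
        rw [← hsum]; ring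
      rw [hsumw, hbary]
      rw [smul_smul, inv_mul_cancel₀ (ne_of_gt hwpos), one_smul]
    rw [hcm] at hmem
    exact hmem

lemma three_bad_false (hinj : Function.Injective f)
    (hgen : ∀ i j k : Fin (n+1), i ≠ j → i ≠ k → j ≠ k → detv (f i) (f j) (f k) ≠ 0)
    {x y z : Fin n} (hxy : x ≠ y) (hxz : x ≠ z) (hyz : y ≠ z)
    (hbx : (∀ j, j ≠ x → 0 < detv (f 0) (f x.succ) (f j.succ)) ∨
           (∀ j, j ≠ x → detv (f 0) (f x.succ) (f j.succ) < 0))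
    (hby : (∀ j, j ≠ y → 0 < detv (f 0) (f y.succ) (f j.succ)) ∨
           (∀ j, j ≠ y → detv (f 0) (f y.succ) (f j.succ) < 0))
    (hbz : (∀ j, j ≠ z → 0 < detv (f 0) (f z.succ) (f j.succ)) ∨
           (∀ j, j ≠ z → detv (f 0) (f z.succ) (f j.succ) < 0)) : False := by
  set H := f 0
  have px1 : 0 < detv H (f x.succ) (f y.succ) * detv H (f x.succ) (f z.succ) := by
    rcases hbx with h | h
    · exact mul_pos (h y hxy.symm) (h z hxz.symm)
    · exact mul_pos_of_neg_of_neg (h y hxy.symm) (h z hxz.symm)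
  have py1 : 0 < detv H (f y.succ) (f x.succ) * detv H (f y.succ) (f z.succ) := by
    rcases hby with h | h
    · exact mul_pos (h x hxy) (h z hyz.symm)
    · exact mul_pos_of_neg_of_neg (h x hxy) (h z hyz.symm)
  have pz1 : 0 < detv H (f z.succ) (f x.succ) * detv H (f z.succ) (f y.succ) := by
    rcases hbz with h | h
    · exact mul_pos (h x hxz) (h y hyz)
    · exact mul_pos_of_neg_of_neg (h x hxz) (h y hyz)
  set A := detv H (f x.succ) (f y.succ) with hAd
  set B := detv H (f y.succ) (f z.succ) with hBd
  set C := detv H (f z.succ) (f x.succ) with hCd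
  have e1 : detv H (f x.succ) (f z.succ) = - C := by rw [hCd, detv_anti]
  have e2 : detv H (f y.succ) (f x.succ) = - A := by rw [hAd, detv_anti]
  have e3 : detv H (f z.succ) (f y.succ) = - B := by rw [hBd, detv_anti]
  rw [e1] at px1
  rw [e2] at py1
  rw [e3] at pz1
  have h1 : A * C < 0 := by nlinarith [px1]
  have h2 : A * B < 0 := by nlinarith [py1]
  have h3 : B * C < 0 := by nlinarith [pz1]
  nlinarith [mul_pos_of_neg_of_neg h1 h2, h3, sq_nonneg A, sq_nonneg (A*B*C)]

end Drawing

section Flip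

lemma nextFin_val {n : ℕ} (i : Fin n) : (nextFin i).val = (i.val + 1) % n := rfl

lemma iter_nextFin_val {n : ℕ} (x : Fin n) (m : ℕ) :
    ((nextFin^[m]) x).val = (x.val + m) % n := by
  induction m with
  | zero => simp [Nat.mod_eq_of_lt x.isLt]
  | succ m ih =>
    rw [Function.iterate_succ_apply', nextFin_val, ih, Nat.mod_add_mod, Nat.add_assoc]

lemma iter_nextFin_ne {n : ℕ} (x : Fin n) (m : ℕ) (hm1 : 1 ≤ m) (hm2 : m < n) :
    (nextFin^[m]) x ≠ x := by
  intro h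
  have hval : (x.val + m) % n = x.val := by
    rw [← iter_nextFin_val x m, h]
  have hx : x.val % n = x.val := Nat.mod_eq_of_lt x.isLt
  have hmod : (x.val + m) % n = (x.val + 0) % n := by
    rw [hval]; rw [Nat.add_zero, hx]
  have : m % n = 0 % n := Nat.ModEq.add_left_cancel' x.val hmod
  rw [Nat.zero_mod, Nat.mod_eq_of_lt hm2] at this
  omega

lemma iter_nextFin_surj {n : ℕ} (x j : Fin n) (hj : j ≠ x) :
    ∃ m, 1 ≤ m ∧ m ≤ n - 1 ∧ (nextFin^[m]) x = j := by
  rcases Nat.lt_or_ge x.val j.val with h | h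
  · refine ⟨j.val - x.val, by omega, by have := j.isLt; omega, ?_⟩
    apply Fin.ext
    rw [iter_nextFin_val]
    have : x.val + (j.val - x.val) = j.val := by omega
    rw [this, Nat.mod_eq_of_lt j.isLt]
  · have hne : x.val ≠ j.val := fun h' => hj (Fin.ext h'.symm)
    have hlt : j.val < x.val := by omega
    refine ⟨n + j.val - x.val, by have := x.isLt; omega, by omega, ?_⟩
    apply Fin.ext
    rw [iter_nextFin_val]
    have : x.val + (n + j.val - x.val) = n + j.val := by have := x.isLt; omega
    rw [this]
    rw [Nat.add_mod_left, Nat.mod_eq_of_lt j.isLt]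

lemma cyclic_flip {n : ℕ} (hn : 2 ≤ n) (σ : Fin n → ℝ) (x : Fin n)
    (hne : ∀ j, j ≠ x → σ j ≠ 0)
    (hpos : ∃ j, j ≠ x ∧ 0 < σ j) (hneg : ∃ j, j ≠ x ∧ σ j < 0) :
    ∃ i : Fin n, i ≠ x ∧ nextFin i ≠ x ∧ σ i * σ (nextFin i) < 0 := by
  by_contra hcon
  push_neg at hcon
  set g : ℕ → Fin n := fun m => (nextFin^[m]) x with hg
  have hgne : ∀ m, 1 ≤ m → m ≤ n - 1 → g m ≠ x := by
    intro m h1 h2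
    exact iter_nextFin_ne x m h1 (by omega)
  have key : ∀ m, 1 ≤ m → m ≤ n - 1 → 0 < σ (g 1) * σ (g m) := by
    intro m
    induction m with
    | zero => intro h; omega
    | succ m ih =>
      intro h1 h2
      rcases Nat.eq_or_lt_of_le h1 with heq | hlt
      · rw [← heq]
        have hne1 : σ (g 1) ≠ 0 := hne _ (hgne 1 le_rfl (by omega))
        exact mul_self_pos.2 hne1
      · have hm1 : 1 ≤ m := by omega
        have hm2 : m ≤ n - 1 := by omega
        have ihm := ih hm1 hm2
        have hgm : g (m + 1) = nextFin (g m) := Function.iterate_succ_apply' nextFin m x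
        have hstep : 0 ≤ σ (g m) * σ (g (m+1)) := by
          rw [hgm]
          exact hcon (g m) (hgne m hm1 (by omega)) (by rw [← hgm]; exact hgne (m+1) (by omega) h2)
        have hnem : σ (g m) ≠ 0 := hne _ (hgne m hm1 hm2)
        have hnem1 : σ (g (m+1)) ≠ 0 := hne _ (hgne (m+1) (by omega) h2)
        have hstep' : 0 < σ (g m) * σ (g (m+1)) :=
          lt_of_le_of_ne hstep (Ne.symm (mul_ne_zero hnem hnem1))
        nlinarith [ihm, hstep', sq_nonneg (σ (g m))]
  obtain ⟨j, hj, hjpos⟩ := hpos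
  obtain ⟨l, hl, hlneg⟩ := hneg
  obtain ⟨mj, hmj1, hmj2, hmj⟩ := iter_nextFin_surj x j hj
  obtain ⟨ml, hml1, hml2, hml⟩ := iter_nextFin_surj x l hl
  have kj : 0 < σ (g 1) * σ j := by rw [← hmj]; exact key mj hmj1 hmj2
  have kl : 0 < σ (g 1) * σ l := by rw [← hml]; exact key ml hml1 hml2
  nlinarith [kj, kl, hjpos, hlneg]

end Flip

end Aux9
end

noncomputable section
namespace Aux9
open Finset

section Graphs

variable {n : ℕ}

lemma nextFin_ne_self (hn : 2 ≤ n) (i : Fin n) : nextFin i ≠ i :=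
  iter_nextFin_ne i 1 le_rfl (by omega)

/-- star edges as a finset -/
def starFS (n : ℕ) : Finset (Sym2 (Fin (n+1))) :=
  Finset.image (fun i : Fin n => s((0 : Fin (n+1)), i.succ)) Finset.univ

/-- cycle edges as a finset -/
def cycFS (n : ℕ) : Finset (Sym2 (Fin (n+1))) :=
  Finset.image (fun i : Fin n => s(i.succ, (nextFin i).succ)) Finset.univ

lemma star_map_inj : Function.Injective (fun i : Fin n => s((0 : Fin (n+1)), i.succ)) := by
  intro i j h
  simp only [Sym2.eq_iff] at h
  rcases h with ⟨-, h2⟩ | ⟨h1, -⟩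
  · exact Fin.succ_injective n h2
  · exact absurd h1.symm (Fin.succ_ne_zero j)

lemma cyc_map_inj (hn : 5 ≤ n) :
    Function.Injective (fun i : Fin n => s(i.succ, (nextFin i).succ)) := by
  intro i j h
  simp only [Sym2.eq_iff] at h
  rcases h with ⟨h1, -⟩ | ⟨h1, h2⟩
  · exact Fin.succ_injective n h1
  · exfalso
    have e1 : i = nextFin j := Fin.succ_injective n h1
    have e2 : nextFin i = j := Fin.succ_injective n h2
    have : (nextFin^[2]) j = j := by
      simp only [Function.iterate_succ, Function.iterate_zero, Function.comp_apply, id_eq]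
      rw [← e1, e2]
    exact iter_nextFin_ne j 2 (by omega) (by omega) this

lemma starFS_eq (n : ℕ) :
    (starGraph n).edgeSet.toFinite.toFinset = starFS n := by
  apply Finset.ext
  intro e
  rw [Set.Finite.mem_toFinset]
  unfold starGraph
  rw [SimpleGraph.edgeSet_fromEdgeSet]
  constructor
  · rintro ⟨⟨i, rfl⟩, -⟩
    exact Finset.mem_image.2 ⟨i, Finset.mem_univ i, rfl⟩
  · intro he
    obtain ⟨i, -, rfl⟩ := Finset.mem_image.1 he
    refine ⟨⟨i, rfl⟩, ?_⟩
    simp only [Set.mem_setOf_eq, Sym2.mem_diagSet, Sym2.isDiag_iff_proj_eq]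
    exact fun h => (Fin.succ_ne_zero i) h.symm

lemma wheel_sub (hn : 5 ≤ n) :
    starFS n ∪ cycFS n ⊆ (wheelGraph n).edgeSet.toFinite.toFinset := by
  intro e he
  rw [Set.Finite.mem_toFinset]
  unfold wheelGraph
  rw [SimpleGraph.edgeSet_fromEdgeSet]
  rcases Finset.mem_union.1 he with he | he
  · obtain ⟨i, -, rfl⟩ := Finset.mem_image.1 he
    refine ⟨Or.inl ⟨i, rfl⟩, ?_⟩
    simp only [Set.mem_setOf_eq, Sym2.mem_diagSet, Sym2.isDiag_iff_proj_eq]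
    exact fun h => (Fin.succ_ne_zero i) h.symm
  · obtain ⟨i, -, rfl⟩ := Finset.mem_image.1 he
    refine ⟨Or.inr ⟨i, rfl⟩, ?_⟩
    simp only [Set.mem_setOf_eq, Sym2.mem_diagSet, Sym2.isDiag_iff_proj_eq]
    intro h
    exact nextFin_ne_self (by omega) i (Fin.succ_injective n h).symm

lemma star_cyc_disj (n : ℕ) : Disjoint (starFS n) (cycFS n) := by
  rw [Finset.disjoint_left]
  intro e he hce
  obtain ⟨i, -, rfl⟩ := Finset.mem_image.1 he
  obtain ⟨j, -, hj⟩ := Finset.mem_image.1 hce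
  rw [Sym2.eq_iff] at hj
  rcases hj with ⟨h1, -⟩ | ⟨-, h2⟩
  · exact Fin.succ_ne_zero j h1
  · exact Fin.succ_ne_zero (nextFin j) h2

variable (f : Fin (n + 1) → Pt)

lemma star_crossings_eq (n : ℕ) (f : Fin (n + 1) → Pt) :
    drawingCrossings (starGraph n) f = ∑ i : Fin n, sepCount f 0 i.succ := by
  unfold drawingCrossings
  rw [starFS_eq n]
  unfold starFS
  rw [Finset.sum_image (fun i _ j _ h => star_map_inj h)]
  apply Finset.sum_congr rfl
  intro i _
  rfl

lemma wheel_crossings_ge (hn : 5 ≤ n) (f : Fin (n + 1) → Pt) :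
    (∑ i : Fin n, sepCount f 0 i.succ) +
      (∑ i : Fin n, sepCount f i.succ ((nextFin i).succ)) ≤
    drawingCrossings (wheelGraph n) f := by
  unfold drawingCrossings
  have hsub := wheel_sub (n := n) hn
  calc (∑ i : Fin n, sepCount f 0 i.succ) +
      (∑ i : Fin n, sepCount f i.succ ((nextFin i).succ))
      = ∑ e ∈ starFS n ∪ cycFS n,
          Sym2.lift ⟨fun s t => sepCount f s t, fun s t => sepCount_symm f s t⟩ e := by
        rw [Finset.sum_union (star_cyc_disj n)]
        congr 1
        · unfold starFS
          rw [Finset.sum_image (fun i _ j _ h => star_map_inj h)]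
          rfl
        · unfold cycFS
          rw [Finset.sum_image (fun i _ j _ h => cyc_map_inj hn h)]
          rfl
    _ ≤ _ := Finset.sum_le_sum_of_subset hsub

end Graphs

section Counting

variable {n : ℕ} (f : Fin (n + 1) → Pt)

lemma card_le_sepCount (s t : Fin (n+1)) (E : Finset (Finset (Fin (n+1))))
    (hE : ∀ e ∈ E, ∃ a b : Fin (n+1), e = {a, b} ∧ a ≠ b ∧ s ∉ e ∧ t ∉ e ∧
      Separates (lineThrough (f a) (f b)) (f s) (f t)) :
    E.card ≤ sepCount f s t := by
  classical
  unfold sepCount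
  rw [← Set.ncard_coe_finset]
  apply Set.ncard_le_ncard ?_ (Set.toFinite _)
  intro e he
  simp only [Finset.coe_mem, Set.mem_setOf_eq] at he ⊢
  exact hE e (by exact_mod_cast he)

/-- cycle-edge separation count from a set of "good" outer vertices -/
lemma cycle_count (hn : 5 ≤ n) (hinj : Function.Injective f)
    (hgen : ∀ i j k : Fin (n+1), i ≠ j → i ≠ k → j ≠ k → detv (f i) (f j) (f k) ≠ 0)
    (G : Finset (Fin n))
    (hG : ∀ x ∈ G, (∃ j, j ≠ x ∧ 0 < detv (f 0) (f x.succ) (f j.succ)) ∧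
                   (∃ j, j ≠ x ∧ detv (f 0) (f x.succ) (f j.succ) < 0)) :
    G.card ≤ ∑ i : Fin n, sepCount f i.succ ((nextFin i).succ) := by
  classical
  have hedge : ∀ x ∈ G, ∃ i : Fin n, i ≠ x ∧ nextFin i ≠ x ∧
      Separates (lineThrough (f 0) (f x.succ)) (f i.succ) (f (nextFin i).succ) := by
    intro x hx
    obtain ⟨hp, hq⟩ := hG x hx
    have hne : ∀ j : Fin n, j ≠ x → detv (f 0) (f x.succ) (f j.succ) ≠ 0 := by
      intro j hj
      apply hgen 0 x.succ j.succ (Fin.succ_ne_zero x).symm (Fin.succ_ne_zero j).symm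
      intro h
      exact hj (Fin.succ_injective n h).symm
    obtain ⟨i, hi1, hi2, hflip⟩ :=
      cyclic_flip (by omega) (fun j => detv (f 0) (f x.succ) (f j.succ)) x hne hp hq
    refine ⟨i, hi1, hi2, sep_of_opposite_side ?_ hflip⟩
    intro h
    exact (Fin.succ_ne_zero x) (hinj h.symm)
  choose ix hix1 hix2 hsep using hedge
  set I : Fin n → Fin n := fun x => if hx : x ∈ G then ix x hx else ⟨0, by omega⟩ with hI
  rw [Finset.card_eq_sum_card_fiberwise (f := I) (t := Finset.univ)
    (fun x _ => Finset.mem_univ (I x))]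
  apply Finset.sum_le_sum
  intro i _
  set E : Finset (Finset (Fin (n+1))) :=
    (G.filter (fun x => I x = i)).image (fun x => ({0, x.succ} : Finset (Fin (n+1)))) with hE
  have hcard : (G.filter (fun x => I x = i)).card = E.card := by
    rw [hE]
    rw [Finset.card_image_of_injOn]
    intro x _ y _ hxy
    have hxy' : ({0, x.succ} : Finset (Fin (n+1))) = {0, y.succ} := hxy
    have hx : x.succ ∈ ({0, y.succ} : Finset (Fin (n+1))) := by
      rw [← hxy']; simp
    simp only [Finset.mem_insert, Finset.mem_singleton] at hx
    rcases hx with hx | hx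
    · exact absurd hx (Fin.succ_ne_zero x)
    · exact Fin.succ_injective n hx
  rw [hcard]
  apply card_le_sepCount
  intro e he
  obtain ⟨x, hxmem, rfl⟩ := Finset.mem_image.1 he
  rw [Finset.mem_filter] at hxmem
  obtain ⟨hxG, hxI⟩ := hxmem
  have hIx : ix x hxG = i := by
    rw [hI] at hxI
    simpa [hxG] using hxI
  refine ⟨0, x.succ, rfl, (Fin.succ_ne_zero x).symm, ?_, ?_, ?_⟩
  · simp only [Finset.mem_insert, Finset.mem_singleton]
    push_neg
    constructor
    · exact (Fin.succ_ne_zero i)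
    · intro h
      exact hix1 x hxG (by rw [hIx] at *; exact Fin.succ_injective n h)
  · simp only [Finset.mem_insert, Finset.mem_singleton]
    push_neg
    constructor
    · exact (Fin.succ_ne_zero (nextFin i))
    · intro h
      apply hix2 x hxG
      rw [hIx]
      exact Fin.succ_injective n h
  · have := hsep x hxG
    rw [hIx] at this
    exact this

lemma exterior_star_count (hn : 5 ≤ n) (hinj : Function.Injective f)
    (hgen : ∀ i j k : Fin (n+1), i ≠ j → i ≠ k → j ≠ k → detv (f i) (f j) (f k) ≠ 0)
    (hext : f 0 ∉ convexHull ℝ (Set.range (fun i : Fin n => f i.succ))) :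
    n.choose 3 ≤ ∑ k : Fin n, sepCount f 0 k.succ := by
  classical
  set T3 : Finset (Finset (Fin n)) := Finset.powersetCard 3 Finset.univ with hT3
  have hwit : ∀ T ∈ T3, ∃ c : Fin n, c ∈ T ∧ ∃ a b : Fin n, a ≠ b ∧
      T.erase c = {a, b} ∧
      Separates (lineThrough (f a.succ) (f b.succ)) (f 0) (f c.succ) := by
    intro T hT
    have hcard : T.card = 3 := (Finset.mem_powersetCard.1 hT).2
    obtain ⟨x, y, z, hxy, hxz, hyz, hTeq⟩ := Finset.card_eq_three.1 hcard
    have hermz : T.erase z = {x, y} := by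
      rw [hTeq]
      ext w
      simp only [Finset.mem_erase, Finset.mem_insert, Finset.mem_singleton]
      constructor
      · rintro ⟨hw, rfl | rfl | rfl⟩
        · exact Or.inl rfl
        · exact Or.inr rfl
        · exact absurd rfl hw
      · rintro (rfl | rfl)
        · exact ⟨hxz, Or.inl rfl⟩
        · exact ⟨hyz, Or.inr (Or.inl rfl)⟩
    have hermx : T.erase x = {y, z} := by
      rw [hTeq]
      ext w
      simp only [Finset.mem_erase, Finset.mem_insert, Finset.mem_singleton]
      constructor
      · rintro ⟨hw, rfl | rfl | rfl⟩
        · exact absurd rfl hw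
        · exact Or.inl rfl
        · exact Or.inr rfl
      · rintro (rfl | rfl)
        · exact ⟨(Ne.symm hxy), Or.inr (Or.inl rfl)⟩
        · exact ⟨(Ne.symm hxz), Or.inr (Or.inr rfl)⟩
    have hermy : T.erase y = {x, z} := by
      rw [hTeq]
      ext w
      simp only [Finset.mem_erase, Finset.mem_insert, Finset.mem_singleton]
      constructor
      · rintro ⟨hw, rfl | rfl | rfl⟩
        · exact Or.inl rfl
        · exact absurd rfl hw
        · exact Or.inr rfl
      · rintro (rfl | rfl)
        · exact ⟨hxy, Or.inl rfl⟩
        · exact ⟨(Ne.symm hyz), Or.inr (Or.inr rfl)⟩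
    have hxT : x ∈ T := by rw [hTeq]; simp
    have hyT : y ∈ T := by rw [hTeq]; simp
    have hzT : z ∈ T := by rw [hTeq]; simp
    rcases exterior_triple f hinj hgen hext hxy hxz hyz with h | h | h
    · refine ⟨z, hzT, x, y, hxy, hermz, ?_⟩
      apply sep_of_opposite_side
      · intro heq
        exact hxy (Fin.succ_injective n (hinj heq))
      · exact h
    · refine ⟨x, hxT, y, z, hyz, hermx, ?_⟩
      apply sep_of_opposite_side
      · intro heq
        exact hyz (Fin.succ_injective n (hinj heq))
      · exact h
    · refine ⟨y, hyT, x, z, hxz, hermy, ?_⟩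
      apply sep_of_opposite_side
      · intro heq
        exact hxz (Fin.succ_injective n (hinj heq))
      · exact h
  choose cT hcT wit using hwit
  set C : Finset (Fin n) → Fin n :=
    fun T => if h : T ∈ T3 then cT T h else ⟨0, by omega⟩ with hC
  have hcount : T3.card = n.choose 3 := by
    rw [hT3, Finset.card_powersetCard, Finset.card_univ, Fintype.card_fin]
  rw [← hcount]
  rw [Finset.card_eq_sum_card_fiberwise (f := C) (t := Finset.univ)
    (fun T _ => Finset.mem_univ (C T))]
  apply Finset.sum_le_sum
  intro k _
  set E : Finset (Finset (Fin (n+1))) :=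
    (T3.filter (fun T => C T = k)).image
      (fun T => (T.erase k).image Fin.succ) with hEdef
  have hcard : (T3.filter (fun T => C T = k)).card = E.card := by
    rw [hEdef, Finset.card_image_of_injOn]
    intro T1 h1 T2 h2 him
    rw [Finset.mem_coe, Finset.mem_filter] at h1 h2
    have he : T1.erase k = T2.erase k := by
      apply Finset.image_injective (Fin.succ_injective n) him
    have hk1 : k ∈ T1 := by
      have := hcT T1 h1.1
      rw [← h1.2, hC]
      simpa [h1.1] using this
    have hk2 : k ∈ T2 := by
      have := hcT T2 h2.1
      rw [← h2.2, hC]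
      simpa [h2.1] using this
    rw [← Finset.insert_erase hk1, ← Finset.insert_erase hk2, he]
  rw [hcard]
  apply card_le_sepCount
  intro e he
  obtain ⟨T, hTmem, rfl⟩ := Finset.mem_image.1 he
  rw [Finset.mem_filter] at hTmem
  obtain ⟨hT, hTC⟩ := hTmem
  have hcTk : cT T hT = k := by
    rw [hC] at hTC
    simpa [hT] using hTC
  obtain ⟨a, b, hab, herase, hsepab⟩ := wit T hT
  rw [hcTk] at herase hsepab
  refine ⟨a.succ, b.succ, ?_, ?_, ?_, ?_, hsepab⟩
  · rw [herase]
    simp [Finset.image_insert, Finset.image_singleton]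
  · intro h
    exact hab (Fin.succ_injective n h)
  · rw [herase]
    simp only [Finset.image_insert, Finset.image_singleton, Finset.mem_insert,
      Finset.mem_singleton]
    push_neg
    exact ⟨(Fin.succ_ne_zero a).symm, (Fin.succ_ne_zero b).symm⟩
  · rw [herase]
    simp only [Finset.image_insert, Finset.image_singleton, Finset.mem_insert,
      Finset.mem_singleton]
    push_neg
    constructor
    · intro h
      have : k = a := Fin.succ_injective n h
      have ha : a ∈ T.erase k := by rw [herase]; simp
      rw [Finset.mem_erase] at ha
      exact ha.1 this.symm
    · intro h
      have : k = b := Fin.succ_injective n h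
      have hb : b ∈ T.erase k := by rw [herase]; simp
      rw [Finset.mem_erase] at hb
      exact hb.1 this.symm

lemma bad_card_le_two (hn : 5 ≤ n) (hinj : Function.Injective f)
    (hgen : ∀ i j k : Fin (n+1), i ≠ j → i ≠ k → j ≠ k → detv (f i) (f j) (f k) ≠ 0) :
    (Finset.univ.filter (fun x : Fin n =>
      (∀ j, j ≠ x → 0 < detv (f 0) (f x.succ) (f j.succ)) ∨
      (∀ j, j ≠ x → detv (f 0) (f x.succ) (f j.succ) < 0))).card ≤ 2 := by
  classical
  by_contra hcon
  push_neg at hcon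
  obtain ⟨x, y, z, hx, hy, hz, hxy, hxz, hyz⟩ := Finset.two_lt_card_iff.1 hcon
  rw [Finset.mem_filter] at hx hy hz
  exact three_bad_false f hinj hgen hxy hxz hyz hx.2 hy.2 hz.2

lemma good_of_not_bad (hn : 5 ≤ n)
    (hgen : ∀ i j k : Fin (n+1), i ≠ j → i ≠ k → j ≠ k → detv (f i) (f j) (f k) ≠ 0)
    (x : Fin n)
    (hnb : ¬ ((∀ j, j ≠ x → 0 < detv (f 0) (f x.succ) (f j.succ)) ∨
      (∀ j, j ≠ x → detv (f 0) (f x.succ) (f j.succ) < 0))) :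
    (∃ j, j ≠ x ∧ 0 < detv (f 0) (f x.succ) (f j.succ)) ∧
    (∃ j, j ≠ x ∧ detv (f 0) (f x.succ) (f j.succ) < 0) := by
  push_neg at hnb
  obtain ⟨⟨j1, hj1, hj1'⟩, ⟨j2, hj2, hj2'⟩⟩ := hnb
  have hne : ∀ j : Fin n, j ≠ x → detv (f 0) (f x.succ) (f j.succ) ≠ 0 := by
    intro j hj
    apply hgen 0 x.succ j.succ (Fin.succ_ne_zero x).symm (Fin.succ_ne_zero j).symm
    intro h
    exact hj (Fin.succ_injective n h).symm
  constructor
  · exact ⟨j2, hj2, lt_of_le_of_ne hj2' (Ne.symm (hne j2 hj2))⟩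
  · exact ⟨j1, hj1, lt_of_le_of_ne hj1' (hne j1 hj1)⟩

end Counting
end Aux9
end


noncomputable section
namespace Aux9
open Finset

section Construction

variable {n : ℕ}

/-- the comparison drawing: leaves on the parabola, hub slightly below the top chord -/
def f0 (n : ℕ) : Fin (n+1) → Pt :=
  fun j => if j = 0 then ((3:ℝ)/2, (2*(n:ℝ)+5)/4) else ((j.val : ℝ), (j.val : ℝ)^2)

lemma f0_zero : f0 n 0 = ((3:ℝ)/2, (2*(n:ℝ)+5)/4) := if_pos rfl

lemma f0_ne_zero (j : Fin (n+1)) (hj : j ≠ 0) : f0 n j = ((j.val : ℝ), (j.val : ℝ)^2) :=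
  if_neg hj

lemma not_half32 (m : ℕ) : ((m : ℝ)) ≠ (3:ℝ)/2 := by
  intro h
  have h2 : ((2 * m : ℕ) : ℝ) = ((3 : ℕ) : ℝ) := by push_cast; linarith
  have := Nat.cast_injective h2
  omega

lemma f0_inj : Function.Injective (f0 n) := by
  intro j k h
  by_cases hj : j = 0 <;> by_cases hk : k = 0
  · rw [hj, hk]
  · exfalso
    rw [hj, f0_zero, f0_ne_zero k hk] at h
    exact not_half32 k.val (congrArg Prod.fst h).symm
  · exfalso
    rw [hk, f0_zero, f0_ne_zero j hj] at h
    exact not_half32 j.val (congrArg Prod.fst h)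
  · rw [f0_ne_zero j hj, f0_ne_zero k hk] at h
    have := congrArg Prod.fst h
    simp only at this
    exact Fin.ext (Nat.cast_injective this)

lemma detv_parab (α β γ : ℝ) :
    detv (α, α^2) (β, β^2) (γ, γ^2) = (β - α) * (γ - α) * (γ - β) := by
  simp only [detv]; ring

lemma detv_chord (α β x y : ℝ) :
    detv (α, α^2) (β, β^2) (x, y) = (β - α) * (y - (α + β) * x + α * β) := by
  simp only [detv]; ring

lemma E_ne (n a b : ℕ) :
    (2*(n:ℝ)+5)/4 - ((a:ℝ) + (b:ℝ)) * (3/2) + (a:ℝ) * (b:ℝ) ≠ 0 := by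
  intro h
  have h4 : (2*(n:ℝ) + 5) - 6*((a:ℝ) + (b:ℝ)) + 4*((a:ℝ) * (b:ℝ)) = 0 := by
    linear_combination 4 * h
  have hz : (2*(n:ℤ) + 5) - 6*((a:ℤ) + (b:ℤ)) + 4*((a:ℤ) * (b:ℤ)) = 0 := by
    exact_mod_cast h4
  have hdvd : (2:ℤ) ∣ 5 :=
    ⟨-((n:ℤ) - 3*((a:ℤ)+(b:ℤ)) + 2*((a:ℤ)*(b:ℤ))), by linarith⟩
  norm_num at hdvd

lemma detv_eq_zero_of_collinear {p q r : Pt} (h : Collinear ℝ ({p, q, r} : Set Pt)) :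
    detv p q r = 0 := by
  obtain ⟨p₀, v, hv⟩ := (collinear_iff_exists_forall_eq_smul_vadd (k := ℝ) (s := ({p, q, r} : Set Pt))).1 h
  obtain ⟨tp, hp⟩ := hv p (by simp)
  obtain ⟨tq, hq⟩ := hv q (by simp)
  obtain ⟨tr, hr⟩ := hv r (by simp)
  have e : ∀ t : ℝ, (t • v +ᵥ p₀ : Pt) = (t * v.1 + p₀.1, t * v.2 + p₀.2) := fun t => rfl
  rw [hp, hq, hr, e tp, e tq, e tr]
  simp only [detv]; ring

lemma f0_hub_det (a b : Fin (n+1)) (ha : a ≠ 0) (hb : b ≠ 0) (hab : a ≠ b) :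
    detv (f0 n a) (f0 n b) (f0 n 0) ≠ 0 := by
  rw [f0_zero, f0_ne_zero a ha, f0_ne_zero b hb, detv_chord]
  have hvne : (a.val : ℝ) ≠ (b.val : ℝ) := by
    intro h
    exact hab (Fin.ext (Nat.cast_injective h))
  apply mul_ne_zero
  · intro h; apply hvne; linarith [sub_eq_zero.1 h]
  · intro h
    apply E_ne n a.val b.val
    linarith [h]

lemma f0_gen : GenericConfig (Set.range (f0 n)) := by
  refine ⟨Set.finite_range _, ?_⟩
  rintro p ⟨i, rfl⟩ q ⟨j, rfl⟩ r ⟨k, rfl⟩ hpq hpr hqr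
  intro hcol
  have hij : i ≠ j := fun h => hpq (by rw [h])
  have hik : i ≠ k := fun h => hpr (by rw [h])
  have hjk : j ≠ k := fun h => hqr (by rw [h])
  have hd : detv (f0 n i) (f0 n j) (f0 n k) = 0 := detv_eq_zero_of_collinear hcol
  have hvne : ∀ u w : Fin (n+1), u ≠ w → ((u.val : ℝ)) ≠ ((w.val : ℝ)) := by
    intro u w huw h
    exact huw (Fin.ext (Nat.cast_injective h))
  by_cases hi : i = 0
  · -- i is the hub
    subst hi
    have hj0 : j ≠ 0 := fun h => hij h.symm
    have hk0 : k ≠ 0 := fun h => hik h.symm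
    apply f0_hub_det j k hj0 hk0 hjk
    rw [detv_rot]
    exact hd
  · by_cases hj : j = 0
    · subst hj
      have hk0 : k ≠ 0 := fun h => hjk h.symm
      apply f0_hub_det i k hi hk0 hik
      -- detv (f0 i) (f0 0) (f0 k) = 0 ; detv P H Q = - detv P Q H?  detv A C B = - detv A B C
      have : detv (f0 n i) (f0 n k) (f0 n 0) = - detv (f0 n i) (f0 n 0) (f0 n k) :=
        detv_swap23 (f0 n i) (f0 n 0) (f0 n k)
      rw [this, hd, neg_zero]
    · by_cases hk : k = 0
      · subst hk
        exact f0_hub_det i j hi hj hij hd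
      · -- all three on the parabola
        rw [f0_ne_zero i hi, f0_ne_zero j hj, f0_ne_zero k hk, detv_parab] at hd
        rcases mul_eq_zero.1 hd with h | h
        · rcases mul_eq_zero.1 h with h | h
          · exact hvne j i hij.symm (by linarith [sub_eq_zero.1 h])
          · exact hvne k i hik.symm (by linarith [sub_eq_zero.1 h])
        · exact hvne k j hjk.symm (by linarith [sub_eq_zero.1 h])

lemma constr_key (hn : 5 ≤ n) (u w κ : ℕ) (hu1 : 1 ≤ u) (huw : u < w) (hwn : w ≤ n)
    (hκu : κ ≠ u) (hκw : κ ≠ w) (hκ1 : 1 ≤ κ) (hκn : κ ≤ n)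
    (hprod : ((2*(n:ℝ)+5)/4 - ((u:ℝ) + (w:ℝ)) * (3/2) + (u:ℝ) * (w:ℝ)) *
             (((κ:ℝ) - (u:ℝ)) * ((κ:ℝ) - (w:ℝ))) < 0) :
    u < κ ∧ κ < w ∧ ¬(u = 1 ∧ w = n) := by
  by_cases hcase : u = 1 ∧ w = n
  · exfalso
    obtain ⟨hu, hw⟩ := hcase
    have huR : (u:ℝ) = 1 := by rw [hu]; norm_num
    have hwR : (w:ℝ) = (n:ℝ) := by rw [hw]
    have hκ1' : 1 < κ := by omega
    have hκn' : κ < n := by omega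
    have hb1 : (1:ℝ) < (κ:ℝ) := by exact_mod_cast hκ1'
    have hb2 : ((κ:ℝ)) < (n:ℝ) := by exact_mod_cast hκn'
    rw [huR, hwR] at hprod
    nlinarith [hprod, mul_pos (by linarith : (0:ℝ) < (κ:ℝ) - 1)
      (by linarith : (0:ℝ) < (n:ℝ) - (κ:ℝ))]
  · have hE : 0 < (2*(n:ℝ)+5)/4 - ((u:ℝ) + (w:ℝ)) * (3/2) + (u:ℝ) * (w:ℝ) := by
      have hZ : (0:ℤ) < 2*(n:ℤ) + 5 - 6*((u:ℤ) + (w:ℤ)) + 4*((u:ℤ) * (w:ℤ)) := by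
        rcases eq_or_lt_of_le hu1 with heq | hlt
        · -- u = 1
          have hu' : u = 1 := heq.symm
          subst hu'
          have hwn' : w ≠ n := fun h => hcase ⟨rfl, h⟩
          have h1 : w + 1 ≤ n := by omega
          have h1' : (w:ℤ) + 1 ≤ (n:ℤ) := by exact_mod_cast h1
          push_cast
          nlinarith [h1']
        · -- 2 ≤ u
          have h2u : (2:ℤ) ≤ (u:ℤ) := by exact_mod_cast hlt
          have hwu : (u:ℤ) + 1 ≤ (w:ℤ) := by
            have : u + 1 ≤ w := huw
            exact_mod_cast this
          have h5 : (5:ℤ) ≤ (n:ℤ) := by exact_mod_cast hn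
          have hwn' : (w:ℤ) ≤ (n:ℤ) := by exact_mod_cast hwn
          nlinarith [mul_nonneg (by linarith : (0:ℤ) ≤ (w:ℤ) - (u:ℤ) - 1)
            (by linarith : (0:ℤ) ≤ 4*(u:ℤ) - 6), sq_nonneg ((u:ℤ) - 1)]
      have hR : (0:ℝ) < 2*(n:ℝ) + 5 - 6*((u:ℝ) + (w:ℝ)) + 4*((u:ℝ) * (w:ℝ)) := by
        exact_mod_cast hZ
      linarith
    have h2 : ((κ:ℝ) - (u:ℝ)) * ((κ:ℝ) - (w:ℝ)) < 0 := by
      nlinarith [hprod, hE]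
    have hlt : (u:ℝ) < (κ:ℝ) ∧ ((κ:ℝ)) < (w:ℝ) := by
      rcases mul_neg_iff.1 h2 with ⟨hp, hq⟩ | ⟨hp, hq⟩
      · constructor <;> linarith
      · exfalso
        have huw' : (u:ℝ) < (w:ℝ) := by exact_mod_cast huw
        linarith
    refine ⟨by exact_mod_cast hlt.1, by exact_mod_cast hlt.2, hcase⟩

lemma constr_edge_bound (hn : 5 ≤ n) (k : Fin n) :
    sepCount (f0 n) 0 k.succ ≤
      (((Finset.Icc 1 k.val) ×ˢ (Finset.Icc (k.val + 2) n)).erase (1, n)).card := by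
  classical
  have hmain : sepCount (f0 n) 0 k.succ ≤
      (((((Finset.Icc 1 k.val) ×ˢ (Finset.Icc (k.val + 2) n)).erase (1, n)).image
        (fun p : ℕ × ℕ => ({p.1, p.2} : Finset ℕ))).card) := by
    unfold sepCount
    rw [← Set.ncard_coe_finset]
    apply Set.ncard_le_ncard_of_injOn (fun e => e.image Fin.val)
    · rintro e ⟨a, b, rfl, hab, hs, ht, hsep⟩
      simp only [Finset.mem_insert, Finset.mem_singleton] at hs ht
      push_neg at hs ht
      obtain ⟨ha0, hb0⟩ := hs
      obtain ⟨hta, htb⟩ := ht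
      have ha0' : a ≠ 0 := fun h => ha0 h.symm
      have hb0' : b ≠ 0 := fun h => hb0 h.symm
      have hABne : f0 n a ≠ f0 n b := fun h => hab (f0_inj h)
      have hraw := sep_opposite hABne hsep
      rw [f0_zero, f0_ne_zero a ha0', f0_ne_zero b hb0',
        f0_ne_zero k.succ (Fin.succ_ne_zero k), detv_chord, detv_chord] at hraw
      set α := (a.val : ℝ) with hα
      set β := (b.val : ℝ) with hβ
      set κR := ((k.succ.val : ℕ) : ℝ) with hκR
      -- extract the sign of P*Q
      have hfa : ((β - α) * ((2*(n:ℝ)+5)/4 - (α + β) * (3/2) + α * β)) *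
          ((β - α) * (κR^2 - (α + β) * κR + α * β)) =
          (β - α)^2 * (((2*(n:ℝ)+5)/4 - (α + β) * (3/2) + α * β) *
            ((κR - α) * (κR - β))) := by ring
      rw [hfa] at hraw
      have hPQ : ((2*(n:ℝ)+5)/4 - (α + β) * (3/2) + α * β) *
          ((κR - α) * (κR - β)) < 0 := by
        by_contra hge
        push_neg at hge
        nlinarith [hraw, mul_nonneg (sq_nonneg (β - α)) hge]
      -- numeric facts
      have haval : 1 ≤ a.val := by
        rcases Nat.eq_zero_or_pos a.val with h | h
        · exact absurd (Fin.ext h : a = 0) ha0'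
        · exact h
      have hbval : 1 ≤ b.val := by
        rcases Nat.eq_zero_or_pos b.val with h | h
        · exact absurd (Fin.ext h : b = 0) hb0'
        · exact h
      have havn : a.val ≤ n := by have := a.isLt; omega
      have hbvn : b.val ≤ n := by have := b.isLt; omega
      have hvalne : a.val ≠ b.val := fun h => hab (Fin.ext h)
      have hκval : k.succ.val = k.val + 1 := Fin.val_succ k
      have hκa : k.succ.val ≠ a.val := fun h => hta (Fin.ext h)
      have hκb : k.succ.val ≠ b.val := fun h => htb (Fin.ext h)
      have hκ1 : 1 ≤ k.succ.val := by omega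
      have hκn : k.succ.val ≤ n := by have := k.isLt; omega
      rcases Nat.lt_or_ge a.val b.val with hord | hord
      · -- a.val < b.val
        have hkey := constr_key hn a.val b.val k.succ.val haval hord hbvn hκa hκb hκ1 hκn
          (by
            have hcast : ((k.succ.val : ℕ) : ℝ) = κR := rfl
            exact hPQ)
        obtain ⟨h1, h2, h3⟩ := hkey
        apply Finset.mem_image.2
        refine ⟨(a.val, b.val), ?_, ?_⟩
        · apply Finset.mem_erase.2
          constructor
          · intro h
            rw [Prod.ext_iff] at h
            exact h3 ⟨h.1, h.2⟩
          · apply Finset.mem_product.2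
            constructor
            · rw [Finset.mem_Icc]; omega
            · rw [Finset.mem_Icc]; omega
        · simp [Finset.image_insert, Finset.image_singleton]
      · have hord' : b.val < a.val := by omega
        have hPQ' : ((2*(n:ℝ)+5)/4 - ((b.val:ℝ) + (a.val:ℝ)) * (3/2) + (b.val:ℝ) * (a.val:ℝ)) *
            ((κR - (b.val:ℝ)) * (κR - (a.val:ℝ))) < 0 := by
          nlinarith [hPQ]
        have hkey := constr_key hn b.val a.val k.succ.val hbval hord' havn hκb hκa hκ1 hκn hPQ'
        obtain ⟨h1, h2, h3⟩ := hkey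
        apply Finset.mem_image.2
        refine ⟨(b.val, a.val), ?_, ?_⟩
        · apply Finset.mem_erase.2
          constructor
          · intro h
            rw [Prod.ext_iff] at h
            exact h3 ⟨h.1, h.2⟩
          · apply Finset.mem_product.2
            constructor
            · rw [Finset.mem_Icc]; omega
            · rw [Finset.mem_Icc]; omega
        · simp only [Finset.image_insert, Finset.image_singleton]
          rw [Finset.pair_comm]
    · intro e1 _ e2 _ h12
      exact Finset.image_injective Fin.val_injective h12
  calc sepCount (f0 n) 0 k.succ ≤ _ := hmain
    _ ≤ _ := Finset.card_image_le

lemma sum_range_id_choose (m : ℕ) : ∑ v ∈ Finset.range m, v = m.choose 2 := by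
  induction m with
  | zero => simp
  | succ m ih =>
    have hch : (m+1).choose 2 = m.choose 1 + m.choose 2 := Nat.choose_succ_succ m 1
    rw [Finset.sum_range_succ, ih, hch, Nat.choose_one_right]
    omega

lemma sum_prod_choose (m : ℕ) : ∑ v ∈ Finset.range m, v * (m - 1 - v) = m.choose 3 := by
  induction m with
  | zero => simp
  | succ m ih =>
    rw [Finset.sum_range_succ]
    have h1 : ∀ v ∈ Finset.range m, v * (m + 1 - 1 - v) = v * (m - 1 - v) + v := by
      intro v hv
      rw [Finset.mem_range] at hv
      have h2 : m + 1 - 1 - v = (m - 1 - v) + 1 := by omega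
      rw [h2, Nat.mul_add, Nat.mul_one]
    rw [Finset.sum_congr rfl h1, Finset.sum_add_distrib, ih, sum_range_id_choose]
    have h3 : m * (m + 1 - 1 - m) = 0 := by
      have h4 : m + 1 - 1 - m = 0 := by omega
      rw [h4, Nat.mul_zero]
    have hch : (m+1).choose 3 = m.choose 2 + m.choose 3 := Nat.choose_succ_succ m 2
    rw [h3, Nat.add_zero, hch]
    omega

lemma delta_sum (hn : 5 ≤ n) :
    (∑ k : Fin n, (if k.val = 1 ∨ k.val = n - 2 then 1 else 0)) = 2 := by
  classical
  rw [Fin.sum_univ_eq_sum_range (fun v => if v = 1 ∨ v = n - 2 then 1 else 0) n]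
  have hfil : (Finset.range n).filter (fun v => v = 1 ∨ v = n - 2) = {1, n - 2} := by
    ext v
    simp only [Finset.mem_filter, Finset.mem_range, Finset.mem_insert, Finset.mem_singleton]
    omega
  rw [← Finset.sum_filter, hfil, Finset.sum_const, smul_eq_mul, mul_one]
  rw [Finset.card_insert_of_notMem (by simp only [Finset.mem_singleton]; omega),
    Finset.card_singleton]

lemma constr_total (hn : 5 ≤ n) :
    drawingCrossings (starGraph n) (f0 n) + 2 ≤ n.choose 3 := by
  classical
  rw [star_crossings_eq]
  have hb : ∀ k : Fin n,
      sepCount (f0 n) 0 k.succ + (if k.val = 1 ∨ k.val = n - 2 then 1 else 0)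
        ≤ k.val * (n - 1 - k.val) := by
    intro k
    have h1 := constr_edge_bound hn k
    have hc1 : (Finset.Icc 1 k.val).card = k.val := by
      rw [Nat.card_Icc]; omega
    have hc2 : (Finset.Icc (k.val + 2) n).card = n - 1 - k.val := by
      rw [Nat.card_Icc]; omega
    by_cases hk : k.val = 1 ∨ k.val = n - 2
    · rw [if_pos hk]
      have hmem : ((1, n) : ℕ × ℕ) ∈ (Finset.Icc 1 k.val ×ˢ Finset.Icc (k.val + 2) n) := by
        apply Finset.mem_product.2
        constructor
        · rw [Finset.mem_Icc]; omega
        · rw [Finset.mem_Icc]; omega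
      rw [Finset.card_erase_of_mem hmem, Finset.card_product, hc1, hc2] at h1
      have hpos : 1 ≤ k.val * (n - 1 - k.val) := by
        apply Nat.one_le_iff_ne_zero.2
        apply Nat.mul_ne_zero <;> omega
      omega
    · rw [if_neg hk]
      have h2 := Finset.card_erase_le (s := (Finset.Icc 1 k.val ×ˢ Finset.Icc (k.val + 2) n))
        (a := ((1, n) : ℕ × ℕ))
      rw [Finset.card_product, hc1, hc2] at h2
      omega
  calc (∑ k : Fin n, sepCount (f0 n) 0 k.succ) + 2
      = ∑ k : Fin n, (sepCount (f0 n) 0 k.succ + (if k.val = 1 ∨ k.val = n - 2 then 1 else 0)) := by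
        rw [Finset.sum_add_distrib, delta_sum hn]
    _ ≤ ∑ k : Fin n, k.val * (n - 1 - k.val) := Finset.sum_le_sum (fun k _ => hb k)
    _ = ∑ v ∈ Finset.range n, v * (n - 1 - v) :=
        Fin.sum_univ_eq_sum_range (fun v => v * (n - 1 - v)) n
    _ = n.choose 3 := sum_prod_choose n

end Construction
end Aux9
end

/-- For n ≥ 5 and every rectilinear drawing of the wheel `W_{n,1}`,
`n(R(W_{n,1})) ≥ OCN(K_{n,1}) + n`. -/
theorem stmt_9 (n : ℕ) (hn : 5 ≤ n) (f : Fin (n + 1) → Pt) (hf : IsRectDrawing f) :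
    OCN (starGraph n) + n ≤ drawingCrossings (wheelGraph n) f := by
  classical
  obtain ⟨hinj, hgenC⟩ := hf
  have hgen : ∀ i j k : Fin (n+1), i ≠ j → i ≠ k → j ≠ k →
      Aux9.detv (f i) (f j) (f k) ≠ 0 := by
    intro i j k hij hik hjk
    apply Aux9.detv_ne_zero_of_not_collinear
    exact hgenC.2 (f i) ⟨i, rfl⟩ (f j) ⟨j, rfl⟩ (f k) ⟨k, rfl⟩
      (fun h => hij (hinj h)) (fun h => hik (hinj h)) (fun h => hjk (hinj h))
  have hdecomp := Aux9.wheel_crossings_ge hn f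
  have hOCNf : OCN (starGraph n) ≤ drawingCrossings (starGraph n) f :=
    Nat.sInf_le ⟨f, ⟨hinj, hgenC⟩, rfl⟩
  rw [Aux9.star_crossings_eq] at hOCNf
  by_cases hpos : f 0 ∈ convexHull ℝ (Set.range fun i : Fin n => f i.succ)
  · -- hub inside convex hull of leaves: at least n cycle separations
    have hcyc : n ≤ ∑ i : Fin n, sepCount f i.succ ((nextFin i).succ) := by
      have h := Aux9.cycle_count f hn hinj hgen Finset.univ
        (fun x _ => Aux9.interior_both_sides f hinj hgen hpos x)
      simpa using h
    omega
  · -- hub outside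
    have hstar := Aux9.exterior_star_count f hn hinj hgen hpos
    have hconstr := Aux9.constr_total (n := n) hn
    have hOCNc : OCN (starGraph n) ≤ drawingCrossings (starGraph n) (Aux9.f0 n) :=
      Nat.sInf_le ⟨Aux9.f0 n, ⟨Aux9.f0_inj, Aux9.f0_gen⟩, rfl⟩
    have hcyc2 : n - 2 ≤ ∑ i : Fin n, sepCount f i.succ ((nextFin i).succ) := by
      set Bd : Finset (Fin n) := Finset.univ.filter (fun x : Fin n =>
        (∀ j, j ≠ x → 0 < Aux9.detv (f 0) (f x.succ) (f j.succ)) ∨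
        (∀ j, j ≠ x → Aux9.detv (f 0) (f x.succ) (f j.succ) < 0)) with hBd
      set Gd : Finset (Fin n) := Finset.univ.filter (fun x : Fin n =>
        ¬ ((∀ j, j ≠ x → 0 < Aux9.detv (f 0) (f x.succ) (f j.succ)) ∨
        (∀ j, j ≠ x → Aux9.detv (f 0) (f x.succ) (f j.succ) < 0))) with hGd
      have h1 : Bd.card ≤ 2 := Aux9.bad_card_le_two f hn hinj hgen
      have h2 : Gd.card ≤ ∑ i : Fin n, sepCount f i.succ ((nextFin i).succ) := by
        apply Aux9.cycle_count f hn hinj hgen Gd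
        intro x hx
        rw [hGd, Finset.mem_filter] at hx
        exact Aux9.good_of_not_bad f hn hgen x hx.2
      have h3 : Bd.card + Gd.card = n := by
        rw [hBd, hGd]
        rw [Finset.card_filter_add_card_filter_not]
        simp
      omega
    omega
end
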